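/- arXiv:2411.18550 — 8 statements merged into one kernel-verified Lean document; each statement's English description precedes it below -/
import Mathlib

section
/- The function g(z) := ∫_E log(z − x) ρ(x) dx is complex analytic (holomorphic) on ℂ \ (−∞, √2]. Moreover, if ∫_E ρ(x) dx = 1, then for every integer n the function z ↦ exp(n·g(z)) extends to a holomorphic function on ℂ \ E. -/
open MeasureTheory Set

/-- The spectral interval `E = [-√2, √2]`. -/
noncomputable def E : Set ℝ := Icc (-Real.sqrt 2) (Real.sqrt 2)

/-- The slit `(-∞, √2]`, viewed as a subset of `ℂ`. -/
noncomputable def slit : Set ℂ := {z : ℂ | z.im = 0 ∧ z.re ≤ Real.sqrt 2}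

/-- The interval `E = [-√2, √2]`, viewed as a subset of `ℂ`. -/
noncomputable def Ecx : Set ℂ :=
  {z : ℂ | z.im = 0 ∧ -Real.sqrt 2 ≤ z.re ∧ z.re ≤ Real.sqrt 2}

/-- The g-function `g(z) = ∫_E log(z - x) ρ(x) dx`, with the principal branch
of the complex logarithm. -/
noncomputable def gfun (ρ : ℝ → ℝ) (z : ℂ) : ℂ :=
  ∫ x in E, (ρ x : ℂ) * Complex.log (z - (x : ℂ))

/- ### Auxiliary lemmas -/

lemma isCompact_E : IsCompact E := isCompact_Icc

lemma measurableSet_E : MeasurableSet E := measurableSet_Icc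

lemma isOpen_slitc : IsOpen slitᶜ := by
  have : slit = (Complex.im ⁻¹' {0}) ∩ (Complex.re ⁻¹' Iic (Real.sqrt 2)) := rfl
  rw [this]
  exact ((isClosed_singleton.preimage Complex.continuous_im).inter
    (isClosed_Iic.preimage Complex.continuous_re)).isOpen_compl

lemma isOpen_Ecxc : IsOpen Ecxᶜ := by
  have : Ecx = (Complex.im ⁻¹' {0}) ∩ (Complex.re ⁻¹' Icc (-Real.sqrt 2) (Real.sqrt 2)) := by
    ext z; simp [Ecx, Set.mem_Icc, and_assoc]
  rw [this]
  exact ((isClosed_singleton.preimage Complex.continuous_im).inter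
    (isClosed_Icc.preimage Complex.continuous_re)).isOpen_compl

lemma slitc_mem_slitPlane {z : ℂ} {x : ℝ} (hz : z ∈ slitᶜ) (hx : x ∈ E) :
    z - (x : ℂ) ∈ Complex.slitPlane := by
  rw [Complex.mem_slitPlane_iff]
  simp only [slit, mem_compl_iff, mem_setOf_eq, not_and, not_le] at hz
  rcases eq_or_ne z.im 0 with h | h
  · left
    have := hz h
    have hx2 := hx.2
    simp only [Complex.sub_re, Complex.ofReal_re]
    linarith
  · right
    simpa using h

lemma slitc_ne_zero {z : ℂ} (hz : z ∈ slitᶜ) : z ≠ 0 := by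
  intro h
  apply hz
  rw [h]
  exact ⟨rfl, Real.sqrt_nonneg 2⟩

lemma slitc_subset_Ecxc : slitᶜ ⊆ Ecxᶜ := fun z hz h => hz ⟨h.1, h.2.2⟩

lemma Ecxc_ne_zero {z : ℂ} (hz : z ∈ Ecxᶜ) : z ≠ 0 := by
  intro h
  apply hz
  rw [h]
  refine ⟨rfl, ?_, Real.sqrt_nonneg 2⟩
  simpa using Real.sqrt_nonneg 2

lemma Ecxc_sub_ne_zero {z : ℂ} {x : ℝ} (hz : z ∈ Ecxᶜ) (hx : x ∈ E) : z - (x : ℂ) ≠ 0 := by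
  intro h
  apply hz
  have hzx : z = (x : ℂ) := by linear_combination h
  rw [hzx]
  exact ⟨Complex.ofReal_im x, by simpa using hx.1, by simpa using hx.2⟩

lemma Ecxc_mem_slitPlane {z : ℂ} {x : ℝ} (hz : z ∈ Ecxᶜ) (hx : x ∈ E) :
    (z - (x : ℂ)) / z ∈ Complex.slitPlane := by
  have hz0 : z ≠ 0 := Ecxc_ne_zero hz
  rw [Complex.mem_slitPlane_iff_not_le_zero]
  intro hle
  set w : ℂ := (z - (x : ℂ)) / z with hw
  obtain ⟨hre, him⟩ : w.re ≤ 0 ∧ w.im = 0 := by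
    rw [Complex.le_def] at hle
    exact ⟨by simpa using hle.1, by simpa using hle.2⟩
  set t : ℝ := w.re with ht
  have hwt : w = (t : ℂ) := Complex.ext rfl (by simpa using him)
  have h1 : z * (1 - w) = (x : ℂ) := by
    have h2 : w * z = z - (x : ℂ) := div_mul_cancel₀ _ hz0
    linear_combination -h2
  have hne : (1 : ℂ) - w ≠ 0 := by
    rw [hwt]
    intro h
    have : (1 : ℝ) - t = 0 := by exact_mod_cast (by push_cast at h ⊢; linear_combination h : ((1 - t : ℝ) : ℂ) = 0)
    linarith
  have hzval : z = ((x / (1 - t) : ℝ) : ℂ) := by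
    push_cast
    rw [← hwt]
    field_simp at h1 ⊢
    linear_combination h1
  apply hz
  rw [hzval]
  have habs : |x / (1 - t)| ≤ Real.sqrt 2 := by
    have hxle : |x| ≤ Real.sqrt 2 := abs_le.mpr ⟨hx.1, hx.2⟩
    have h1t : (1 : ℝ) ≤ 1 - t := by linarith
    calc |x / (1 - t)| = |x| / |1 - t| := abs_div _ _
      _ ≤ |x| := by
          apply div_le_self (abs_nonneg _)
          rwa [abs_of_pos (by linarith)]
      _ ≤ Real.sqrt 2 := hxle
  obtain ⟨hl, hr⟩ := abs_le.mp habs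
  refine ⟨Complex.ofReal_im _, ?_, ?_⟩ <;> rw [Complex.ofReal_re]
  · exact hl
  · exact hr

/-- Splitting of the logarithm on the complement of the slit. -/
lemma log_split {z : ℂ} {x : ℝ} (hz : z ∈ slitᶜ) (hx : x ∈ E) :
    Complex.log (z - (x : ℂ)) = Complex.log ((z - (x : ℂ)) / z) + Complex.log z := by
  have hz0 : z ≠ 0 := slitc_ne_zero hz
  have hzx : z - (x : ℂ) ∈ Complex.slitPlane := slitc_mem_slitPlane hz hx
  have hzx0 : z - (x : ℂ) ≠ 0 := Complex.slitPlane_ne_zero hzx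
  have hzE : z ∈ Ecxᶜ := slitc_subset_Ecxc hz
  have hwmem : (z - (x : ℂ)) / z ∈ Complex.slitPlane := Ecxc_mem_slitPlane hzE hx
  have hw0 : (z - (x : ℂ)) / z ≠ 0 := div_ne_zero hzx0 hz0
  set D : ℂ := Complex.log (z - (x : ℂ)) - Complex.log ((z - (x : ℂ)) / z) - Complex.log z
    with hD
  have hexp : Complex.exp D = 1 := by
    rw [hD, Complex.exp_sub, Complex.exp_sub, Complex.exp_log hzx0,
      Complex.exp_log hw0, Complex.exp_log hz0]
    field_simp
  obtain ⟨k, hk⟩ := Complex.exp_eq_one_iff.mp hexp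
  have hIm : D.im = (z - (x : ℂ)).arg - ((z - (x : ℂ)) / z).arg - z.arg := by
    simp [hD, Complex.sub_im, Complex.log_im]
  have h1 : |((z - (x : ℂ)) / z).arg| < Real.pi :=
    abs_lt.mpr ⟨Complex.neg_pi_lt_arg _,
      lt_of_le_of_ne (Complex.arg_le_pi _) (Complex.slitPlane_arg_ne_pi hwmem)⟩
  have h2 : |(z - (x : ℂ)).arg - z.arg| < Real.pi := by
    have him : (z - (x : ℂ)).im = z.im := by simp
    rcases lt_trichotomy z.im 0 with h | h | h
    · have ha : (z - (x : ℂ)).arg < 0 := Complex.arg_neg_iff.mpr (by rw [him]; exact h)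
      have hb : z.arg < 0 := Complex.arg_neg_iff.mpr h
      have ha' : -Real.pi < (z - (x : ℂ)).arg := Complex.neg_pi_lt_arg _
      have hb' : -Real.pi < z.arg := Complex.neg_pi_lt_arg _
      rw [abs_lt]; constructor <;> linarith
    · -- z.im = 0, so z.re > √2 and both args are 0
      simp only [slit, mem_compl_iff, mem_setOf_eq, not_and, not_le] at hz
      have hre : Real.sqrt 2 < z.re := hz h
      have ha : (z - (x : ℂ)).arg = 0 := Complex.arg_eq_zero_iff.mpr
        ⟨by simp only [Complex.sub_re, Complex.ofReal_re]; nlinarith [hx.2], by rw [him]; exact h⟩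
      have hb : z.arg = 0 := Complex.arg_eq_zero_iff.mpr
        ⟨le_of_lt (lt_of_le_of_lt (Real.sqrt_nonneg 2) hre), h⟩
      rw [ha, hb]
      simpa using Real.pi_pos
    · have ha : 0 ≤ (z - (x : ℂ)).arg := Complex.arg_nonneg_iff.mpr (by rw [him]; exact h.le)
      have hb : 0 ≤ z.arg := Complex.arg_nonneg_iff.mpr h.le
      have ha' : (z - (x : ℂ)).arg < Real.pi := Complex.arg_lt_pi_iff.mpr (Or.inr (by rw [him]; exact h.ne'))
      have hb' : z.arg < Real.pi := Complex.arg_lt_pi_iff.mpr (Or.inr h.ne')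
      rw [abs_lt]; constructor <;> linarith
  have hbound : |D.im| < 2 * Real.pi := by
    rw [hIm]
    calc |(z - (x : ℂ)).arg - ((z - (x : ℂ)) / z).arg - z.arg|
        = |((z - (x : ℂ)).arg - z.arg) + (-((z - (x : ℂ)) / z).arg)| := by ring_nf
      _ ≤ |(z - (x : ℂ)).arg - z.arg| + |(-((z - (x : ℂ)) / z).arg)| := abs_add_le _ _
      _ < Real.pi + Real.pi := by rw [abs_neg]; exact add_lt_add h2 h1
      _ = 2 * Real.pi := by ring
  have hkim : D.im = (k : ℝ) * (2 * Real.pi) := by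
    rw [hk]
    simp [Complex.mul_im, Complex.mul_re]
  have hk0 : k = 0 := by
    by_contra hk0
    have : (1 : ℝ) ≤ |(k : ℝ)| := by
      rw [← Int.cast_abs]
      exact_mod_cast Int.one_le_abs hk0
    rw [hkim, abs_mul, abs_of_pos (by positivity : (0:ℝ) < 2 * Real.pi)] at hbound
    nlinarith [Real.pi_pos]
  have : D = 0 := by rw [hk, hk0]; simp
  rw [hD] at this
  linear_combination this

/-- Differentiability of parametric integrals over `E`. -/
lemma key_diff (U : Set ℂ) (hU : IsOpen U) (ρ : ℝ → ℝ) (hρ : Continuous ρ)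
    (φ φ' : ℂ → ℝ → ℂ)
    (hc : ∀ z ∈ U, ContinuousOn (fun x => φ z x) E)
    (hc' : ContinuousOn (fun p : ℂ × ℝ => φ' p.1 p.2) (U ×ˢ E))
    (hd : ∀ x ∈ E, ∀ z ∈ U, HasDerivAt (fun w => φ w x) (φ' z x) z) :
    DifferentiableOn ℂ (fun z => ∫ x in E, (ρ x : ℂ) * φ z x) U := by
  intro z₀ hz₀
  obtain ⟨r, hr, hball⟩ := Metric.isOpen_iff.mp hU z₀ hz₀
  have hsub : Metric.closedBall z₀ (r / 2) ⊆ U :=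
    (Metric.closedBall_subset_ball (by linarith)).trans hball
  have hK : IsCompact (Metric.closedBall z₀ (r / 2) ×ˢ E) :=
    (isCompact_closedBall _ _).prod isCompact_E
  obtain ⟨C, hC⟩ := hK.exists_bound_of_continuousOn (hc'.mono (prod_mono hsub subset_rfl))
  have hcρ : ContinuousOn (fun x : ℝ => (ρ x : ℂ)) E :=
    (Complex.continuous_ofReal.comp hρ).continuousOn
  have hmeas : ∀ z ∈ U, AEStronglyMeasurable (fun x => (ρ x : ℂ) * φ z x)
      (volume.restrict E) := fun z hz =>
    (hcρ.mul (hc z hz)).aestronglyMeasurable measurableSet_E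
  have hφ'cont : ContinuousOn (fun x => φ' z₀ x) E := by
    have heq : (fun x => φ' z₀ x) = (fun p : ℂ × ℝ => φ' p.1 p.2) ∘ (fun x => (z₀, x)) := rfl
    rw [heq]
    exact hc'.comp (Continuous.continuousOn (by fun_prop)) (fun x hx => ⟨hz₀, hx⟩)
  have hmeas' : AEStronglyMeasurable (fun x => (ρ x : ℂ) * φ' z₀ x) (volume.restrict E) :=
    (hcρ.mul hφ'cont).aestronglyMeasurable measurableSet_E
  have hae : ∀ᵐ x ∂(volume.restrict E), x ∈ E := ae_restrict_mem measurableSet_E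
  have key := hasDerivAt_integral_of_dominated_loc_of_deriv_le (μ := volume.restrict E)
    (F := fun z x => (ρ x : ℂ) * φ z x) (F' := fun z x => (ρ x : ℂ) * φ' z x)
    (bound := fun x => |ρ x| * C) (Metric.ball_mem_nhds _ (half_pos hr))
    (Filter.eventually_iff_exists_mem.mpr ⟨U, hU.mem_nhds hz₀, hmeas⟩)
    ((hcρ.mul (hc z₀ hz₀)).integrableOn_compact isCompact_E) hmeas'
    (hae.mono fun x hx => fun z hz => by
      rw [norm_mul, Complex.norm_real, Real.norm_eq_abs]
      refine mul_le_mul_of_nonneg_left ?_ (abs_nonneg _)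
      exact hC (z, x) ⟨Metric.ball_subset_closedBall hz, hx⟩)
    (((hρ.abs.mul continuous_const).continuousOn).integrableOn_compact isCompact_E)
    (hae.mono fun x hx => fun z hz =>
      (hd x hx z (hsub (Metric.ball_subset_closedBall hz))).const_mul _)
  exact key.2.differentiableAt.differentiableWithinAt

/-- The g-function is holomorphic on `ℂ \ (-∞, √2]`, and if `∫_E ρ = 1` then for every
integer `n` the function `exp(n g)` extends holomorphically to `ℂ \ E`. -/
theorem gfun_holomorphic_and_exp_extends (ρ : ℝ → ℝ) (hcont : Continuous ρ)
    (hnonneg : ∀ x, 0 ≤ ρ x) (hsupp : ∀ x, x ∉ E → ρ x = 0) :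
    DifferentiableOn ℂ (gfun ρ) slitᶜ ∧
    ((∫ x in E, ρ x) = 1 →
      ∀ n : ℤ, ∃ G : ℂ → ℂ, DifferentiableOn ℂ G Ecxᶜ ∧
        ∀ z ∈ slitᶜ, G z = Complex.exp ((n : ℂ) * gfun ρ z)) := by
  have hcρ : ContinuousOn (fun x : ℝ => (ρ x : ℂ)) E :=
    (Complex.continuous_ofReal.comp hcont).continuousOn
  constructor
  · -- differentiability of gfun on slitᶜ
    exact key_diff slitᶜ isOpen_slitc ρ hcont
      (fun z x => Complex.log (z - (x : ℂ))) (fun z x => 1 / (z - (x : ℂ)))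
      (fun z hz x hx => by
        have hg : ContinuousAt (fun x : ℝ => z - (x : ℂ)) x :=
          (continuous_const.sub Complex.continuous_ofReal).continuousAt
        exact (ContinuousAt.comp (f := fun x : ℝ => z - (x : ℂ))
          (continuousAt_clog (slitc_mem_slitPlane hz hx)) hg).continuousWithinAt)
      (fun p hp =>
        (ContinuousAt.div continuousAt_const
          ((continuous_fst.sub (Complex.continuous_ofReal.comp continuous_snd)).continuousAt)
          (Complex.slitPlane_ne_zero (slitc_mem_slitPlane hp.1 hp.2))).continuousWithinAt)
      (fun x hx z hz =>
        ((hasDerivAt_id z).sub_const ((x : ℝ) : ℂ)).clog (slitc_mem_slitPlane hz hx))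
  · intro hρ1 n
    -- the auxiliary function h(z) = ∫ ρ(x) log((z-x)/z)
    have hdiffh : DifferentiableOn ℂ
        (fun z => ∫ x in E, (ρ x : ℂ) * Complex.log ((z - (x : ℂ)) / z)) Ecxᶜ := by
      apply key_diff Ecxᶜ isOpen_Ecxc ρ hcont
        (fun z x => Complex.log ((z - (x : ℂ)) / z))
        (fun z x => ((x : ℂ) / z ^ 2) / ((z - (x : ℂ)) / z))
      · intro z hz x hx
        have hg : ContinuousAt (fun x : ℝ => (z - (x : ℂ)) / z) x :=
          ((continuous_const.sub Complex.continuous_ofReal).div_const z).continuousAt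
        exact (ContinuousAt.comp (f := fun x : ℝ => (z - (x : ℂ)) / z)
          (continuousAt_clog (Ecxc_mem_slitPlane hz hx)) hg).continuousWithinAt
      · intro p hp
        have hz0 : p.1 ≠ 0 := Ecxc_ne_zero hp.1
        have h1 : ContinuousAt (fun p : ℂ × ℝ => ((p.2 : ℂ)) / p.1 ^ 2) p :=
          ContinuousAt.div ((Complex.continuous_ofReal.comp continuous_snd).continuousAt)
            ((continuous_fst.pow 2).continuousAt) (pow_ne_zero 2 hz0)
        have h2 : ContinuousAt (fun p : ℂ × ℝ => (p.1 - (p.2 : ℂ)) / p.1) p :=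
          ContinuousAt.div
            ((continuous_fst.sub (Complex.continuous_ofReal.comp continuous_snd)).continuousAt)
            continuous_fst.continuousAt hz0
        exact (h1.div h2 (div_ne_zero (Ecxc_sub_ne_zero hp.1 hp.2) hz0)).continuousWithinAt
      · intro x hx z hz
        have hz0 : z ≠ 0 := Ecxc_ne_zero hz
        have hdiv : HasDerivAt (fun w => (w - ((x : ℝ) : ℂ)) / w)
            ((1 * z - (z - ((x : ℝ) : ℂ)) * 1) / z ^ 2) z :=
          ((hasDerivAt_id z).sub_const _).div (hasDerivAt_id z) hz0
        have h2 := hdiv.clog (Ecxc_mem_slitPlane hz hx)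
        have he : (1 * z - (z - ((x : ℝ) : ℂ)) * 1) / z ^ 2 = ((x : ℝ) : ℂ) / z ^ 2 := by
          ring
        rwa [he] at h2
    refine ⟨fun z => z ^ n *
      Complex.exp ((n : ℂ) * ∫ x in E, (ρ x : ℂ) * Complex.log ((z - (x : ℂ)) / z)), ?_, ?_⟩
    · refine DifferentiableOn.mul ?_ (DifferentiableOn.cexp ?_)
      · exact fun z hz =>
          (differentiableAt_zpow.mpr (Or.inl (Ecxc_ne_zero hz))).differentiableWithinAt
      · exact hdiffh.const_mul _
    · intro z hz
      have hz0 : z ≠ 0 := slitc_ne_zero hz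
      have hzE : z ∈ Ecxᶜ := slitc_subset_Ecxc hz
      have hφc : ContinuousOn (fun x : ℝ => Complex.log ((z - (x : ℂ)) / z)) E :=
        fun x hx => by
          have hg : ContinuousAt (fun x : ℝ => (z - (x : ℂ)) / z) x :=
            ((continuous_const.sub Complex.continuous_ofReal).div_const z).continuousAt
          exact (ContinuousAt.comp (f := fun x : ℝ => (z - (x : ℂ)) / z)
            (continuousAt_clog (Ecxc_mem_slitPlane hzE hx)) hg).continuousWithinAt
      have i2 : IntegrableOn (fun x => (ρ x : ℂ) * Complex.log ((z - (x : ℂ)) / z)) E :=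
        (hcρ.mul hφc).integrableOn_compact isCompact_E
      have i3 : IntegrableOn (fun x => (ρ x : ℂ) * Complex.log z) E :=
        (hcρ.mul continuousOn_const).integrableOn_compact isCompact_E
      have hsum : gfun ρ z =
          (∫ x in E, (ρ x : ℂ) * Complex.log ((z - (x : ℂ)) / z)) + Complex.log z := by
        have e1 : EqOn (fun x : ℝ => (ρ x : ℂ) * Complex.log (z - (x : ℂ)))
            (fun x : ℝ => (ρ x : ℂ) * Complex.log ((z - (x : ℂ)) / z)
              + (ρ x : ℂ) * Complex.log z) E := fun x hx => by
          simp only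
          rw [log_split hz hx]
          ring
        unfold gfun
        rw [setIntegral_congr_fun measurableSet_E e1, integral_add i2 i3]
        congr 1
        have e2 : ∀ x : ℝ, (ρ x : ℂ) * Complex.log z = ρ x • Complex.log z := fun x =>
          (Complex.real_smul).symm
        simp_rw [e2]
        rw [integral_smul_const, hρ1, one_smul]
      rw [hsum, mul_add, Complex.exp_add]
      have hzn : Complex.exp ((n : ℂ) * Complex.log z) = z ^ n := by
        rw [Complex.exp_int_mul, Complex.exp_log hz0]
      simp only [hzn]
      ring
end

section
/- Let α ∈ ℝ and let a, b, p, q, r : ℝ → ℂ be differentiable functions with q(x) ≠ 0 for all x, satisfying for all x ∈ ℝ the system a′(x) = x/2 − q(x), b′(x) = 1/2 − x·a(x) + 2p(x), p′(x) = r(x) − q(x)·b(x), q′(x) = 2(a(x)·q(x) − p(x)), r′(x) = 2(b(x)·p(x) − a(x)·r(x)), together with the constraints q(x) = x/2 − b(x) − a(x)² and 4(p(x)² + r(x)·q(x)) = α². Then q is twice differentiable and solves the Painlevé-XXXIV equation: q″(x) = q′(x)²/(2q(x)) + 2x·q(x) − 4q(x)² − α²/(2q(x)) for all x ∈ ℝ.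 -/
/-- The Lax-system/ODE formulation: if `a, b, p, q, r : ℝ → ℂ` are differentiable,
`q` never vanishes, they satisfy the coupled first-order system
`a' = x/2 - q`, `b' = 1/2 - x a + 2p`, `p' = r - q b`, `q' = 2(a q - p)`,
`r' = 2(b p - a r)` together with the constraints `q = x/2 - b - a²` and
`4(p² + r q) = α²`, then `q` is twice differentiable and solves the Painlevé-XXXIV
equation `q'' = (q')²/(2q) + 2x q - 4q² - α²/(2q)`. -/
theorem lax_system_implies_painleve_XXXIV (α : ℝ) (a b p q r : ℝ → ℂ)
    (ha : Differentiable ℝ a) (hb : Differentiable ℝ b) (hp : Differentiable ℝ p)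
    (hq : Differentiable ℝ q) (hr : Differentiable ℝ r)
    (hqne : ∀ x : ℝ, q x ≠ 0)
    (eqa : ∀ x : ℝ, deriv a x = (x : ℂ) / 2 - q x)
    (eqb : ∀ x : ℝ, deriv b x = 1 / 2 - (x : ℂ) * a x + 2 * p x)
    (eqp : ∀ x : ℝ, deriv p x = r x - q x * b x)
    (eqq : ∀ x : ℝ, deriv q x = 2 * (a x * q x - p x))
    (eqr : ∀ x : ℝ, deriv r x = 2 * (b x * p x - a x * r x))
    (con1 : ∀ x : ℝ, q x = (x : ℂ) / 2 - b x - a x ^ 2)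
    (con2 : ∀ x : ℝ, 4 * (p x ^ 2 + r x * q x) = (α : ℂ) ^ 2) :
    Differentiable ℝ (deriv q) ∧
    ∀ x : ℝ, deriv (deriv q) x
      = (deriv q x) ^ 2 / (2 * q x) + 2 * (x : ℂ) * q x - 4 * q x ^ 2
        - (α : ℂ) ^ 2 / (2 * q x) := by
  have hqd : deriv q = fun x => 2 * (a x * q x - p x) := funext eqq
  have hd1 : Differentiable ℝ (fun x => a x * q x - p x) := (ha.mul hq).sub hp
  have hdiff : Differentiable ℝ (deriv q) := by
    rw [hqd]; exact (differentiable_const (2:ℂ)).mul hd1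
  refine ⟨hdiff, fun x => ?_⟩
  have h2 : deriv (deriv q) x
      = 2 * (deriv a x * q x + a x * deriv q x - deriv p x) := by
    rw [hqd, deriv_const_mul _ (hd1 x),
      deriv_fun_sub (f := fun y => a y * q y) ((ha x).mul (hq x)) (hp x), deriv_fun_mul (ha x) (hq x)]
    simp [eqq]
  rw [h2, eqa, eqp, eqq]
  have hbx : b x = (x : ℂ) / 2 - q x - a x ^ 2 := by linear_combination con1 x
  rw [hbx]
  have hc2 := con2 x
  have hne := hqne x
  field_simp
  linear_combination (-1 : ℂ) * hc2
end

section
/- Let α ∈ ℝ and let u : ℝ → ℝ be twice differentiable satisfying the Painlevé-II equation u″(y) = y·u(y) + 2u(y)³ − (α + 1/2) for all y ∈ ℝ. Define q : ℝ → ℝ by q(x) := −2^{−1/3}·( y/2 + u(y)² + u′(y) ) evaluated at y = −2^{1/3}·x. Then q is twice differentiable, and at every x with q(x) ≠ 0 it satisfies the Painlevé-XXXIV equation q″(x) = q′(x)²/(2q(x)) + 2x·q(x) − 4q(x)² − α²/(2q(x)). -/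
/-- The Okamoto/Gambier correspondence: if `u` is a twice differentiable solution of
the Painlevé-II equation `u'' = y u + 2u³ - (α + 1/2)`, then
`q(x) = -2^{-1/3} (y/2 + u(y)² + u'(y))` evaluated at `y = -2^{1/3} x` is twice
differentiable and, wherever `q(x) ≠ 0`, solves the Painlevé-XXXIV equation
`q'' = (q')²/(2q) + 2x q - 4q² - α²/(2q)`. -/
theorem painleve_II_to_painleve_XXXIV (α : ℝ) (u : ℝ → ℝ)
    (hu : Differentiable ℝ u) (hu' : Differentiable ℝ (deriv u))
    (hP2 : ∀ y : ℝ, deriv (deriv u) y = y * u y + 2 * u y ^ 3 - (α + 1 / 2))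
    (q : ℝ → ℝ)
    (hqdef : ∀ x : ℝ,
      q x = -(2 : ℝ) ^ (-(1 : ℝ) / 3) *
        ((-(2 : ℝ) ^ ((1 : ℝ) / 3) * x) / 2
          + u (-(2 : ℝ) ^ ((1 : ℝ) / 3) * x) ^ 2
          + deriv u (-(2 : ℝ) ^ ((1 : ℝ) / 3) * x))) :
    Differentiable ℝ q ∧ Differentiable ℝ (deriv q) ∧
    ∀ x : ℝ, q x ≠ 0 →
      deriv (deriv q) x
        = (deriv q x) ^ 2 / (2 * q x) + 2 * x * q x - 4 * q x ^ 2
          - α ^ 2 / (2 * q x) := by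
  set c : ℝ := (2 : ℝ) ^ ((1 : ℝ) / 3) with hc
  have hcpos : 0 < c := Real.rpow_pos_of_pos (by norm_num) _
  have hc0 : c ≠ 0 := ne_of_gt hcpos
  have hc3 : c ^ 3 = 2 := by
    rw [hc, ← Real.rpow_natCast ((2:ℝ) ^ ((1:ℝ)/3)) 3, ← Real.rpow_mul (by norm_num)]
    norm_num
  have hcneg : (2 : ℝ) ^ (-(1 : ℝ) / 3) = c⁻¹ := by
    rw [hc, ← Real.rpow_neg (by norm_num : (0:ℝ) ≤ 2)]
    norm_num
  have hqfun : q = fun x => -c⁻¹ * ((-c * x) / 2 + u (-c * x) ^ 2 + deriv u (-c * x)) := by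
    funext x
    rw [hqdef x, hcneg]
  have hg : ∀ x : ℝ, HasDerivAt (fun x : ℝ => -c * x) (-c) x := by
    intro x
    simpa using (hasDerivAt_id x).const_mul (-c)
  have hU : ∀ x : ℝ, HasDerivAt (fun x => u (-c * x)) (deriv u (-c * x) * -c) x := by
    intro x
    exact ((hu (-c * x)).hasDerivAt).comp x (hg x)
  have hU' : ∀ x : ℝ, HasDerivAt (fun x => deriv u (-c * x))
      (deriv (deriv u) (-c * x) * -c) x := by
    intro x
    exact ((hu' (-c * x)).hasDerivAt).comp x (hg x)
  have hQder : ∀ x : ℝ, HasDerivAt q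
      (-c⁻¹ * (-c / 2 + 2 * u (-c * x) ^ 1 * (deriv u (-c * x) * -c)
        + deriv (deriv u) (-c * x) * -c)) x := by
    intro x
    rw [hqfun]
    exact ((((hg x).div_const 2).add ((hU x).pow 2)).add (hU' x)).const_mul (-c⁻¹)
  have hqdiff : Differentiable ℝ q := fun x => (hQder x).differentiableAt
  have hq' : ∀ x : ℝ, deriv q x = -2 * c * u (-c * x) * q x - α := by
    intro x
    rw [(hQder x).deriv, hqdef x, hcneg, hP2 (-c * x)]
    field_simp
    ring
  have hQ2 : ∀ x : ℝ, HasDerivAt (deriv q)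
      (-2 * c * (deriv u (-c * x) * -c) * q x + -2 * c * u (-c * x) * deriv q x) x := by
    intro x
    have : HasDerivAt (fun x => -2 * c * u (-c * x) * q x - α)
        (-2 * c * (deriv u (-c * x) * -c) * q x + -2 * c * u (-c * x) * deriv q x) x := by
      exact (((hU x).const_mul (-2 * c)).mul ((hqdiff x).hasDerivAt)).sub_const α
    exact this.congr_of_eventuallyEq (Filter.Eventually.of_forall hq')
  have hq'diff : Differentiable ℝ (deriv q) := fun x => (hQ2 x).differentiableAt
  refine ⟨hqdiff, hq'diff, ?_⟩
  intro x hQ0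
  have key := (hQ2 x).deriv
  rw [key, hq' x]
  have hUU : deriv u (-c * x) = -c * q x + c * x / 2 - u (-c * x) ^ 2 := by
    have := hqdef x
    rw [hcneg] at this
    field_simp at this
    ring_nf at this ⊢
    linarith
  rw [hUU]
  field_simp
  linear_combination (2 * q x ^ 2 * x - 4 * q x ^ 3) * hc3
end

section
/- Let u : ℝ → ℝ be twice differentiable satisfying the Painlevé-II equation u″(x) = x·u(x) + 2u(x)³ − 1/2 for all x ∈ ℝ, and let v : ℝ → ℝ be twice differentiable such that v(t)² = 2^{−1/3}·( x/2 + u(x)² + u′(x) ) evaluated at x = −2^{1/3}·t, for all t ∈ ℝ. Then at every t with v(t) ≠ 0, v satisfies the Painlevé-II equation with parameter 0: v″(t) = t·v(t) + 2v(t)³. -/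
/-- If `u` is a twice differentiable solution of the Painlevé-II equation
`u'' = x u + 2u³ - 1/2` and `v` is twice differentiable with
`v(t)² = 2^{-1/3} (x/2 + u(x)² + u'(x))` at `x = -2^{1/3} t`, then wherever
`v(t) ≠ 0`, `v` solves the Painlevé-II equation with parameter `0`:
`v'' = t v + 2v³`. -/
theorem painleve_II_square_root_identity (u v : ℝ → ℝ)
    (hu : Differentiable ℝ u) (hu' : Differentiable ℝ (deriv u))
    (hP2 : ∀ x : ℝ, deriv (deriv u) x = x * u x + 2 * u x ^ 3 - 1 / 2)
    (hv : Differentiable ℝ v) (hv' : Differentiable ℝ (deriv v))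
    (hsq : ∀ t : ℝ,
      v t ^ 2 = (2 : ℝ) ^ (-(1 : ℝ) / 3) *
        ((-(2 : ℝ) ^ ((1 : ℝ) / 3) * t) / 2
          + u (-(2 : ℝ) ^ ((1 : ℝ) / 3) * t) ^ 2
          + deriv u (-(2 : ℝ) ^ ((1 : ℝ) / 3) * t))) :
    ∀ t : ℝ, v t ≠ 0 → deriv (deriv v) t = t * v t + 2 * v t ^ 3 := by
  set c : ℝ := (2 : ℝ) ^ ((1 : ℝ) / 3) with hcdef
  have h2pos : (0 : ℝ) < 2 := by norm_num
  have hc3 : c ^ 3 = 2 := by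
    rw [hcdef, ← Real.rpow_natCast ((2:ℝ) ^ ((1:ℝ)/3)) 3,
      ← Real.rpow_mul (le_of_lt h2pos)]
    norm_num
  have hcpos : (0 : ℝ) < c := Real.rpow_pos_of_pos h2pos _
  have hinv : (2 : ℝ) ^ (-(1 : ℝ) / 3) = c ^ 2 / 2 := by
    have h1 : (2 : ℝ) ^ (-(1 : ℝ) / 3) * c = 1 := by
      rw [hcdef, ← Real.rpow_add h2pos]; norm_num
    have hcne : c ≠ 0 := ne_of_gt hcpos
    field_simp
    rw [neg_div] at h1
    linear_combination c ^ 2 * h1 - ((2 : ℝ) ^ (-((1 : ℝ) / 3))) * hc3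
  -- basic derivative facts
  have hXd : ∀ s : ℝ, HasDerivAt (fun s : ℝ => -c * s) (-c) s := by
    intro s
    simpa using (hasDerivAt_id s).const_mul (-c)
  have hud : ∀ s : ℝ, HasDerivAt (fun s : ℝ => u (-c * s)) (deriv u (-c * s) * -c) s := by
    intro s
    exact ((hu (-c * s)).hasDerivAt).comp s (hXd s)
  have hbd : ∀ s : ℝ, HasDerivAt (fun s : ℝ => deriv u (-c * s))
      (deriv (deriv u) (-c * s) * -c) s := by
    intro s
    exact ((hu' (-c * s)).hasDerivAt).comp s (hXd s)
  -- first derivative identity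
  have E1 : ∀ s : ℝ, 2 * v s * deriv v s
      = -(2 * u (-c * s) * deriv u (-c * s) - c * s * u (-c * s) + 2 * u (-c * s) ^ 3) := by
    intro s
    have h1 : HasDerivAt (fun s : ℝ => v s ^ 2) ((2 : ℕ) * v s ^ 1 * deriv v s) s :=
      ((hv s).hasDerivAt).pow 2
    have h2 : HasDerivAt
        (fun s : ℝ => (2 : ℝ) ^ (-(1 : ℝ) / 3) *
          ((-c * s) / 2 + u (-c * s) ^ 2 + deriv u (-c * s)))
        ((2 : ℝ) ^ (-(1 : ℝ) / 3) *
          (-c / 2 + (2 : ℕ) * u (-c * s) ^ 1 * (deriv u (-c * s) * -c)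
            + deriv (deriv u) (-c * s) * -c)) s := by
      exact ((((hXd s).div_const 2).add ((hud s).pow 2)).add (hbd s)).const_mul _
    have hfe : (fun s : ℝ => v s ^ 2)
        = (fun s : ℝ => (2 : ℝ) ^ (-(1 : ℝ) / 3) *
          ((-c * s) / 2 + u (-c * s) ^ 2 + deriv u (-c * s))) := funext hsq
    have h3 : HasDerivAt (fun s : ℝ => v s ^ 2)
        ((2 : ℝ) ^ (-(1 : ℝ) / 3) *
          (-c / 2 + (2 : ℕ) * u (-c * s) ^ 1 * (deriv u (-c * s) * -c)
            + deriv (deriv u) (-c * s) * -c)) s := by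
      rw [hfe]; exact h2
    have huniq := h1.unique h3
    rw [hP2, hinv] at huniq
    push_cast at huniq
    linear_combination huniq
      + (c * s * u (-c * s) / 2 - u (-c * s) * deriv u (-c * s) - u (-c * s) ^ 3) * hc3
  intro t hvt
  -- second derivative identity
  have hE1f : (fun s : ℝ => 2 * v s * deriv v s)
      = (fun s : ℝ => -(2 * u (-c * s) * deriv u (-c * s) - c * s * u (-c * s)
          + 2 * u (-c * s) ^ 3)) := funext E1
  have hL : HasDerivAt (fun s : ℝ => 2 * v s * deriv v s)
      (2 * deriv v t * deriv v t + 2 * v t * deriv (deriv v) t) t := by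
    exact (((hv t).hasDerivAt.const_mul 2).mul ((hv' t).hasDerivAt))
  have hcs : HasDerivAt (fun s : ℝ => c * s) c t := by
    simpa using (hasDerivAt_id t).const_mul c
  have hR : HasDerivAt
      (fun s : ℝ => -(2 * u (-c * s) * deriv u (-c * s) - c * s * u (-c * s)
          + 2 * u (-c * s) ^ 3))
      (-((2 * (deriv u (-c * t) * -c) * deriv u (-c * t)
          + 2 * u (-c * t) * (deriv (deriv u) (-c * t) * -c))
        - (c * u (-c * t) + c * t * (deriv u (-c * t) * -c))
        + 2 * ((3 : ℕ) * u (-c * t) ^ 2 * (deriv u (-c * t) * -c)))) t := by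
    exact (((((hud t).const_mul 2).mul (hbd t)).sub (hcs.mul (hud t))).add
      (((hud t).pow 3).const_mul 2)).neg
  have hR' : HasDerivAt (fun s : ℝ => 2 * v s * deriv v s)
      (-((2 * (deriv u (-c * t) * -c) * deriv u (-c * t)
          + 2 * u (-c * t) * (deriv (deriv u) (-c * t) * -c))
        - (c * u (-c * t) + c * t * (deriv u (-c * t) * -c))
        + 2 * ((3 : ℕ) * u (-c * t) ^ 2 * (deriv u (-c * t) * -c)))) t := by
    rw [hE1f]; exact hR
  have hBraw := hL.unique hR'
  rw [hP2] at hBraw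
  push_cast at hBraw
  -- named quantities
  have hA := E1 t
  have hC := hsq t
  rw [hinv] at hC
  set a := u (-c * t) with ha
  set b := deriv u (-c * t) with hb
  set p := v t with hp
  set q := deriv v t with hq
  set r := deriv (deriv v) t with hr
  have hB : 2 * q ^ 2 + 2 * p * r
      = c * (2 * b ^ 2 - 2 * c * t * a ^ 2 + 4 * a ^ 4 + 6 * a ^ 2 * b - c * t * b) := by
    linear_combination hBraw
  have key : 2 * p ^ 3 * r = 2 * t * p ^ 4 + 4 * p ^ 6 := by
    linear_combination (p ^ 2) * hB
      - ((2 * p * q + (-(2 * a * b - c * t * a + 2 * a ^ 3))) / 2) * hA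
      + (c * (2 * b ^ 2 - 2 * c * t * a ^ 2 + 4 * a ^ 4 + 6 * a ^ 2 * b - c * t * b)
          - 2 * t * (p ^ 2 + c ^ 2 / 2 * ((-c * t) / 2 + a ^ 2 + b))
          - 4 * (p ^ 4 + p ^ 2 * (c ^ 2 / 2 * ((-c * t) / 2 + a ^ 2 + b))
              + (c ^ 2 / 2 * ((-c * t) / 2 + a ^ 2 + b)) ^ 2)) * hC
      + ((2 * (a ^ 2 + b) - c * t) ^ 2 * ((a ^ 2 + b) + a ^ 2) / 4
          - c * (2 * (a ^ 2 + b) - c * t) ^ 2 * t / 8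
          - (2 * (a ^ 2 + b) - c * t) ^ 3 * (c ^ 3 + 2) / 16) * hc3
  have hp2 : p ^ 2 ≠ 0 := pow_ne_zero _ hvt
  have key' : p ^ 2 * (2 * p * r - 2 * t * p ^ 2 - 4 * p ^ 4) = 0 := by
    linear_combination key
  have h5 : 2 * p * r - 2 * t * p ^ 2 - 4 * p ^ 4 = 0 := by
    rcases mul_eq_zero.mp key' with h | h
    · exact absurd h hp2
    · exact h
  have h6 : (2 * p) * (r - (t * p + 2 * p ^ 3)) = 0 := by linear_combination h5
  rcases mul_eq_zero.mp h6 with h | h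
  · exact absurd h (by simpa using hvt)
  · linarith [h]
end

section
/- Let α ∈ ℝ, let I ⊆ ℝ be an open interval, and let σ : I → ℝ be three times differentiable satisfying the Jimbo–Miwa–Okamoto sigma-form of Painlevé-II, (σ″(t))² + 4σ′(t)·( (σ′(t))² − t·σ′(t) + σ(t) ) = α² for all t ∈ I, with σ′(t) ≠ 0 and σ″(t) ≠ 0 for all t ∈ I. Then q := σ′ satisfies the Painlevé-XXXIV equation q″(t) = q′(t)²/(2q(t)) + 2t·q(t) − 4q(t)² − α²/(2q(t)) for all t ∈ I. -/
/-- If `σ` is three times differentiable on an open interval `I` and solves the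
Jimbo–Miwa–Okamoto sigma-form of Painlevé-II,
`(σ'')² + 4σ'((σ')² - t σ' + σ) = α²`, with `σ'` and `σ''` nonvanishing on `I`, then
`q := σ'` solves the Painlevé-XXXIV equation
`q'' = (q')²/(2q) + 2t q - 4q² - α²/(2q)` on `I`. -/
theorem sigma_form_to_painleve_XXXIV (α : ℝ) (I : Set ℝ)
    (hIopen : IsOpen I) (hIconv : Convex ℝ I) (σ : ℝ → ℝ)
    (hd1 : ∀ t ∈ I, DifferentiableAt ℝ σ t)
    (hd2 : ∀ t ∈ I, DifferentiableAt ℝ (deriv σ) t)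
    (hd3 : ∀ t ∈ I, DifferentiableAt ℝ (deriv (deriv σ)) t)
    (hsig : ∀ t ∈ I,
      (deriv (deriv σ) t) ^ 2
        + 4 * deriv σ t * ((deriv σ t) ^ 2 - t * deriv σ t + σ t) = α ^ 2)
    (hne1 : ∀ t ∈ I, deriv σ t ≠ 0)
    (hne2 : ∀ t ∈ I, deriv (deriv σ) t ≠ 0) :
    ∀ t ∈ I,
      deriv (deriv (deriv σ)) t
        = (deriv (deriv σ) t) ^ 2 / (2 * deriv σ t) + 2 * t * deriv σ t
          - 4 * (deriv σ t) ^ 2 - α ^ 2 / (2 * deriv σ t) := by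
  intro t ht
  set a := σ t with ha
  set b := deriv σ t with hb
  set c := deriv (deriv σ) t with hc
  set d := deriv (deriv (deriv σ)) t with hdd
  have hσ : HasDerivAt σ b t := (hd1 t ht).hasDerivAt
  have hσ' : HasDerivAt (deriv σ) c t := (hd2 t ht).hasDerivAt
  have hσ'' : HasDerivAt (deriv (deriv σ)) d t := (hd3 t ht).hasDerivAt
  have hF : HasDerivAt (fun s => (deriv (deriv σ) s) ^ 2
      + 4 * deriv σ s * ((deriv σ s) ^ 2 - s * deriv σ s + σ s))
      (2 * c ^ 1 * d + (4 * c * (b ^ 2 - t * b + a)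
        + 4 * b * ((2 * b ^ 1 * c - ((1 : ℝ) * b + t * c)) + b))) t := by
    exact (hσ''.pow 2).add (((hσ'.const_mul 4).mul
      ((hσ'.pow 2).sub ((hasDerivAt_id t).mul hσ') |>.add hσ))
      )
  have heq : (fun s => (deriv (deriv σ) s) ^ 2
      + 4 * deriv σ s * ((deriv σ s) ^ 2 - s * deriv σ s + σ s))
      =ᶠ[nhds t] fun _ => α ^ 2 :=
    Filter.eventually_of_mem (hIopen.mem_nhds ht) (fun s hs => hsig s hs)
  have hzero : 2 * c ^ 1 * d + (4 * c * (b ^ 2 - t * b + a)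
      + 4 * b * ((2 * b ^ 1 * c - ((1 : ℝ) * b + t * c)) + b)) = 0 := by
    have h1 : HasDerivAt (fun _ : ℝ => α ^ 2) (2 * c ^ 1 * d + (4 * c * (b ^ 2 - t * b + a)
        + 4 * b * ((2 * b ^ 1 * c - ((1 : ℝ) * b + t * c)) + b))) t :=
      hF.congr_of_eventuallyEq heq.symm
    have h2 := h1.deriv
    simpa using h2.symm
  have hb0 := hne1 t ht
  have hc0 := hne2 t ht
  have hs := hsig t ht
  rw [← hb, ← hc, ← ha] at hs
  have hc0' : c ≠ 0 := by rw [hc]; exact hc0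
  have hfac : c * (2 * d + 4 * (b ^ 2 - t * b + a) + 8 * b ^ 2 - 4 * t * b) = 0 := by
    linear_combination hzero
  have hdval : d = -2 * (b ^ 2 - t * b + a) - 4 * b ^ 2 + 2 * t * b := by
    rcases mul_eq_zero.mp hfac with h | h
    · exact absurd h hc0'
    · linarith
  field_simp [show b ≠ 0 from hb0]
  linear_combination 2 * b * hdval - hs
end

section
/- Let n ≥ 1, let w : ℝ → ℂ be measurable with ∫_ℝ |x|^m·|w(x)| dx < ∞ for every m ∈ ℕ, and let φ : ℝ → ℂ be bounded and measurable. Suppose π₀, …, π_{n−1} are polynomials with complex coefficients such that deg π_j = j with nonzero leading coefficient ς_j, and ∫_ℝ π_j(x)·π_k(x)·w(x) dx = δ_{jk} for 0 ≤ j, k ≤ n−1. Then ∫_{ℝⁿ} ∏_{1≤j<k≤n} (x_k − x_j)² · ∏_{m=1}^{n} (1 − φ(x_m))·w(x_m) dx₁…dxₙ = n! · ( ∏_{j=0}^{n−1} ς_j^{−2} ) · det[ δ_{jk} − ∫_ℝ φ(x)·π_{j−1}(x)·π_{k−1}(x)·w(x) dx ]_{j,k=1}^{n}. -/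
open MeasureTheory

lemma gff_prod_pairs {M : Type*} [CommMonoid M] {n : ℕ} (f : Fin n → Fin n → M) :
    ∏ p ∈ Finset.univ.filter (fun p : Fin n × Fin n => p.1 < p.2), f p.1 p.2
      = ∏ i : Fin n, ∏ j ∈ Finset.Ioi i, f i j := by
  rw [Finset.prod_sigma']
  refine Finset.prod_nbij' (fun p => ⟨p.1, p.2⟩) (fun p => (p.1, p.2)) ?_ ?_ ?_ ?_ ?_ <;>
    simp [Finset.mem_Ioi, Finset.mem_filter]

lemma gff_integrable_poly {w : ℝ → ℂ} (hw : Measurable w)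
    (hmom : ∀ m : ℕ, Integrable (fun x : ℝ => |x| ^ m * ‖w x‖))
    (r : Polynomial ℂ) : Integrable (fun x : ℝ => r.eval (x : ℂ) * w x) := by
  have base : ∀ i : ℕ, Integrable (fun x : ℝ => (x : ℂ) ^ i * w x) := by
    intro i
    apply Integrable.mono' (hmom i)
      (((Complex.measurable_ofReal.pow_const i).mul hw).aestronglyMeasurable)
    filter_upwards with x
    apply le_of_eq
    simp [norm_mul, norm_pow, Complex.norm_real]
  have hrw : (fun x : ℝ => r.eval (x : ℂ) * w x)
      = fun x : ℝ => ∑ i ∈ Finset.range (r.natDegree + 1), r.coeff i * ((x : ℂ) ^ i * w x) := by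
    funext x
    rw [Polynomial.eval_eq_sum_range, Finset.sum_mul]
    exact Finset.sum_congr rfl fun i _ => by ring
  rw [hrw]
  exact integrable_finset_sum _ fun i _ => (base i).const_mul _

lemma gff_integrable_bdd_poly {w : ℝ → ℂ} (hw : Measurable w)
    (hmom : ∀ m : ℕ, Integrable (fun x : ℝ => |x| ^ m * ‖w x‖))
    {b : ℝ → ℂ} (hb : Measurable b) {C : ℝ} (hbd : ∀ x, ‖b x‖ ≤ C)
    (r : Polynomial ℂ) :
    Integrable (fun x : ℝ => b x * (r.eval (x : ℂ) * w x)) :=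
  (gff_integrable_poly hw hmom r).bdd_mul hb.aestronglyMeasurable (Filter.Eventually.of_forall hbd)

set_option maxHeartbeats 2000000 in
/-- Orthogonal-polynomial factorization of the generating-functional integral
(Heine/Andréief): for a weight `w` with all moments finite and orthonormal
polynomials `π₀, …, π_{n-1}` (with `deg π_j = j` and nonzero leading coefficients
`ς_j`), and a bounded measurable test function `φ`,
`∫_{ℝⁿ} ∏_{j<k}(x_k - x_j)² ∏_m (1 - φ(x_m)) w(x_m) dx
  = n! ∏_j ς_j⁻² · det[δ_{jk} - ∫ φ π_{j-1} π_{k-1} w]`. -/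
theorem generating_functional_factorization (n : ℕ) (hn : 1 ≤ n)
    (w : ℝ → ℂ) (hw : Measurable w)
    (hmom : ∀ m : ℕ, Integrable (fun x : ℝ => |x| ^ m * ‖w x‖))
    (φ : ℝ → ℂ) (hφm : Measurable φ) (hφb : ∃ C : ℝ, ∀ x : ℝ, ‖φ x‖ ≤ C)
    (P : Fin n → Polynomial ℂ)
    (hdeg : ∀ j : Fin n, (P j).natDegree = (j : ℕ))
    (hlead : ∀ j : Fin n, (P j).leadingCoeff ≠ 0)
    (horth : ∀ j k : Fin n,
      (∫ x : ℝ, (P j).eval (x : ℂ) * (P k).eval (x : ℂ) * w x)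
        = if j = k then 1 else 0) :
    (∫ x : Fin n → ℝ,
        ((∏ p ∈ Finset.univ.filter (fun p : Fin n × Fin n => p.1 < p.2),
            (x p.2 - x p.1) ^ 2 : ℝ) : ℂ)
          * ∏ m : Fin n, ((1 - φ (x m)) * w (x m)))
      = (n.factorial : ℂ) * (∏ j : Fin n, ((P j).leadingCoeff ^ 2)⁻¹)
        * Matrix.det (Matrix.of fun j k : Fin n =>
            (if j = k then (1 : ℂ) else 0)
              - ∫ x : ℝ, φ x * (P j).eval (x : ℂ) * (P k).eval (x : ℂ) * w x) := by
  classical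
  obtain ⟨C, hC⟩ := hφb
  set g : ℝ → ℂ := fun x => (1 - φ x) * w x with hgdef
  set c : ℂ := ∏ j : Fin n, (P j).leadingCoeff with hcdef
  have hc : c ≠ 0 := Finset.prod_ne_zero_iff.mpr fun j _ => hlead j
  set A : Fin n → Fin n → ℂ :=
    fun j k => ∫ x : ℝ, (P j).eval (x : ℂ) * (P k).eval (x : ℂ) * g x with hAdef
  -- integrability facts
  have hg_meas : Measurable fun x : ℝ => (1 : ℂ) - φ x := measurable_const.sub hφm
  have hb1 : ∀ x : ℝ, ‖(1 : ℂ) - φ x‖ ≤ 1 + C := by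
    intro x
    calc ‖(1 : ℂ) - φ x‖ ≤ ‖(1 : ℂ)‖ + ‖φ x‖ := by
          simpa using norm_sub_le (1 : ℂ) (φ x)
      _ ≤ 1 + C := by simpa using add_le_add_left (hC x) 1
  have hIg : ∀ j k : Fin n,
      Integrable (fun x : ℝ => (P j).eval (x : ℂ) * (P k).eval (x : ℂ) * g x) := by
    intro j k
    have h := gff_integrable_bdd_poly hw hmom hg_meas hb1 (P j * P k)
    have e : (fun x : ℝ => ((1 : ℂ) - φ x) * ((P j * P k).eval (x : ℂ) * w x))
        = fun x : ℝ => (P j).eval (x : ℂ) * (P k).eval (x : ℂ) * g x := by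
      funext x
      simp only [hgdef, Polynomial.eval_mul]
      ring
    rwa [e] at h
  -- the matrix entries
  have hA : ∀ j k : Fin n, A j k = (if j = k then (1 : ℂ) else 0)
      - ∫ x : ℝ, φ x * (P j).eval (x : ℂ) * (P k).eval (x : ℂ) * w x := by
    intro j k
    have h1 : Integrable (fun x : ℝ => (P j).eval (x : ℂ) * (P k).eval (x : ℂ) * w x) := by
      have h := gff_integrable_poly hw hmom (P j * P k)
      have e : (fun x : ℝ => (P j * P k).eval (x : ℂ) * w x)
          = fun x : ℝ => (P j).eval (x : ℂ) * (P k).eval (x : ℂ) * w x := by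
        funext x; rw [Polynomial.eval_mul]
      rwa [e] at h
    have h2 : Integrable
        (fun x : ℝ => φ x * ((P j).eval (x : ℂ) * (P k).eval (x : ℂ) * w x)) := by
      have h := gff_integrable_bdd_poly hw hmom hφm hC (P j * P k)
      have e : (fun x : ℝ => φ x * ((P j * P k).eval (x : ℂ) * w x))
          = fun x : ℝ => φ x * ((P j).eval (x : ℂ) * (P k).eval (x : ℂ) * w x) := by
        funext x; rw [Polynomial.eval_mul]
      rwa [e] at h
    have key : A j k = (∫ x : ℝ, (P j).eval (x : ℂ) * (P k).eval (x : ℂ) * w x)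
        - ∫ x : ℝ, φ x * ((P j).eval (x : ℂ) * (P k).eval (x : ℂ) * w x) := by
      rw [hAdef, ← integral_sub h1 h2]
      apply integral_congr_ae
      filter_upwards with x
      simp only [hgdef]
      ring
    rw [key, horth j k]
    congr 1
    apply integral_congr_ae
    filter_upwards with x
    ring
  -- determinant of the coefficient matrix
  have hcoef : Matrix.det (Matrix.of fun i j : Fin n => (P j).coeff (i : ℕ)) = c := by
    rw [Matrix.det_of_upperTriangular]
    · rw [hcdef]
      refine Finset.prod_congr rfl fun i _ => ?_
      simp only [Matrix.of_apply]
      rw [show ((i : ℕ)) = (P i).natDegree from (hdeg i).symm, Polynomial.coeff_natDegree]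
    · intro i j hij
      exact Polynomial.coeff_eq_zero_of_natDegree_lt (by rw [hdeg]; exact_mod_cast hij)
  -- the determinant identity
  have hD : ∀ x : Fin n → ℝ,
      Matrix.det (Matrix.of fun j k : Fin n => (P j).eval ((x k : ℂ)))
        = c * ∏ i : Fin n, ∏ j ∈ Finset.Ioi i, ((x j : ℂ) - (x i : ℂ)) := by
    intro x
    rw [← Matrix.det_transpose]
    have ht : Matrix.transpose (Matrix.of fun j k : Fin n => (P j).eval ((x k : ℂ)))
        = Matrix.of fun i j : Fin n => (P j).eval ((x i : ℂ)) := rfl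
    rw [ht, Matrix.eval_matrixOfPolynomials_eq_vandermonde_mul_matrixOfPolynomials
        (fun i => ((x i : ℂ))) P (fun i => le_of_eq (hdeg i)),
      Matrix.det_mul, Matrix.det_vandermonde, hcoef]
    ring
  -- pointwise expansion of the integrand
  have hpt : ∀ x : Fin n → ℝ,
      ((∏ p ∈ Finset.univ.filter (fun p : Fin n × Fin n => p.1 < p.2),
          (x p.2 - x p.1) ^ 2 : ℝ) : ℂ) * ∏ m : Fin n, ((1 - φ (x m)) * w (x m))
      = (c ^ 2)⁻¹ * ∑ q : Equiv.Perm (Fin n) × Equiv.Perm (Fin n),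
          (((Equiv.Perm.sign q.1 : ℤ) : ℂ) * ((Equiv.Perm.sign q.2 : ℤ) : ℂ))
            * ∏ m : Fin n,
              ((P (q.1 m)).eval ((x m : ℂ)) * (P (q.2 m)).eval ((x m : ℂ)) * g (x m)) := by
    intro x
    have hcast : (((∏ p ∈ Finset.univ.filter (fun p : Fin n × Fin n => p.1 < p.2),
        (x p.2 - x p.1) ^ 2 : ℝ)) : ℂ)
        = ∏ p ∈ Finset.univ.filter (fun p : Fin n × Fin n => p.1 < p.2),
            ((x p.2 : ℂ) - (x p.1 : ℂ)) ^ 2 := by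
      push_cast
      rfl
    have hgm : (∏ m : Fin n, ((1 - φ (x m)) * w (x m))) = ∏ m : Fin n, g (x m) := rfl
    rw [hcast, hgm, gff_prod_pairs (fun i j => ((x j : ℂ) - (x i : ℂ)) ^ 2)]
    simp_rw [Finset.prod_pow]
    -- now LHS = V^2 * ∏ g
    have hV : (∏ i : Fin n, ∏ j ∈ Finset.Ioi i, ((x j : ℂ) - (x i : ℂ))) ^ 2
        = (c ^ 2)⁻¹ * (Matrix.det (Matrix.of fun j k : Fin n => (P j).eval ((x k : ℂ)))
            * Matrix.det (Matrix.of fun j k : Fin n => (P j).eval ((x k : ℂ)))) := by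
      rw [hD x]
      field_simp
    rw [hV, mul_assoc]
    congr 1
    -- expand the two determinants
    rw [Matrix.det_apply', Finset.sum_mul_sum, Finset.sum_mul, Fintype.sum_prod_type]
    refine Finset.sum_congr rfl fun σ _ => ?_
    rw [Finset.sum_mul]
    refine Finset.sum_congr rfl fun τ _ => ?_
    simp only [Matrix.of_apply]
    simp only [Finset.prod_mul_distrib]
    ring
  -- rewrite the integral
  rw [show (fun x : Fin n → ℝ =>
      ((∏ p ∈ Finset.univ.filter (fun p : Fin n × Fin n => p.1 < p.2),
          (x p.2 - x p.1) ^ 2 : ℝ) : ℂ) * ∏ m : Fin n, ((1 - φ (x m)) * w (x m)))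
    = fun x : Fin n → ℝ => (c ^ 2)⁻¹ * ∑ q : Equiv.Perm (Fin n) × Equiv.Perm (Fin n),
          (((Equiv.Perm.sign q.1 : ℤ) : ℂ) * ((Equiv.Perm.sign q.2 : ℤ) : ℂ))
            * ∏ m : Fin n,
              ((P (q.1 m)).eval ((x m : ℂ)) * (P (q.2 m)).eval ((x m : ℂ)) * g (x m))
    from funext hpt]
  rw [integral_const_mul]
  rw [integral_finset_sum Finset.univ (fun q _ =>
    ((Integrable.fintype_prod (fun m => hIg (q.1 m) (q.2 m))).const_mul _))]
  have hterm : ∀ q : Equiv.Perm (Fin n) × Equiv.Perm (Fin n),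
      (∫ x : Fin n → ℝ,
        (((Equiv.Perm.sign q.1 : ℤ) : ℂ) * ((Equiv.Perm.sign q.2 : ℤ) : ℂ))
          * ∏ m : Fin n,
            ((P (q.1 m)).eval ((x m : ℂ)) * (P (q.2 m)).eval ((x m : ℂ)) * g (x m)))
      = (((Equiv.Perm.sign q.1 : ℤ) : ℂ) * ((Equiv.Perm.sign q.2 : ℤ) : ℂ))
          * ∏ m : Fin n, A (q.1 m) (q.2 m) := by
    intro q
    rw [integral_const_mul, volume_pi,
      integral_fintype_prod_eq_prod (ι := Fin n) (μ := fun _ => volume)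
        (fun m (t : ℝ) => (P (q.1 m)).eval ((t : ℂ)) * (P (q.2 m)).eval ((t : ℂ)) * g t)]
  simp_rw [hterm]
  -- the permutation sum identity
  have hsum : (∑ q : Equiv.Perm (Fin n) × Equiv.Perm (Fin n),
      (((Equiv.Perm.sign q.1 : ℤ) : ℂ) * ((Equiv.Perm.sign q.2 : ℤ) : ℂ))
        * ∏ m : Fin n, A (q.1 m) (q.2 m))
      = (n.factorial : ℂ) * Matrix.det (Matrix.of A) := by
    rw [Fintype.sum_prod_type]
    have hdetA : Matrix.det (Matrix.of A)
        = ∑ ρ : Equiv.Perm (Fin n), ((Equiv.Perm.sign ρ : ℤ) : ℂ) * ∏ i, A i (ρ i) := by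
      rw [← Matrix.det_transpose, Matrix.det_apply']
      rfl
    have inner : ∀ σ : Equiv.Perm (Fin n),
        (∑ τ : Equiv.Perm (Fin n),
          (((Equiv.Perm.sign σ : ℤ) : ℂ) * ((Equiv.Perm.sign τ : ℤ) : ℂ))
            * ∏ m : Fin n, A (σ m) (τ m)) = Matrix.det (Matrix.of A) := by
      intro σ
      rw [← Equiv.sum_comp (Equiv.mulRight σ) (fun τ =>
        (((Equiv.Perm.sign σ : ℤ) : ℂ) * ((Equiv.Perm.sign τ : ℤ) : ℂ))
          * ∏ m : Fin n, A (σ m) (τ m)), hdetA]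
      refine Finset.sum_congr rfl fun ρ _ => ?_
      have hmr : (Equiv.mulRight σ) ρ = ρ * σ := rfl
      have h2 : (∏ m : Fin n, A (σ m) ((ρ * σ) m)) = ∏ i : Fin n, A i (ρ i) := by
        have : ∀ m : Fin n, (ρ * σ) m = ρ (σ m) := fun m => rfl
        simp_rw [this]
        exact Equiv.prod_comp σ (fun i => A i (ρ i))
      have h1 : ((Equiv.Perm.sign σ : ℤ) : ℂ) * ((Equiv.Perm.sign (ρ * σ) : ℤ) : ℂ)
          = ((Equiv.Perm.sign ρ : ℤ) : ℂ) := by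
        rw [Equiv.Perm.sign_mul]
        rcases Int.units_eq_one_or (Equiv.Perm.sign σ) with h | h <;>
          rcases Int.units_eq_one_or (Equiv.Perm.sign ρ) with h' | h' <;>
            simp [h, h']
      rw [hmr, h2, h1]
    rw [Finset.sum_congr rfl (fun σ _ => inner σ), Finset.sum_const, Finset.card_univ,
      Fintype.card_perm, Fintype.card_fin, nsmul_eq_mul]
  rw [hsum]
  -- assemble
  have hmat : (Matrix.of fun j k : Fin n =>
      (if j = k then (1 : ℂ) else 0)
        - ∫ x : ℝ, φ x * (P j).eval ((x : ℂ)) * (P k).eval ((x : ℂ)) * w x)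
      = Matrix.of A := by
    ext j k
    simp only [Matrix.of_apply]
    exact (hA j k).symm
  rw [hmat]
  have hprod : (∏ j : Fin n, ((P j).leadingCoeff ^ 2)⁻¹) = (c ^ 2)⁻¹ := by
    rw [hcdef, ← Finset.prod_pow, ← Finset.prod_inv_distrib]
  rw [hprod]
  ring
end

section
/- Let n ≥ 1, let w : ℝ → ℂ be measurable with ∫_ℝ |x|^m·|w(x)| dx < ∞ for every m ∈ ℕ. Suppose π₀, …, π_{n−1} are polynomials with complex coefficients such that deg π_j = j with nonzero leading coefficient ς_j, and ∫_ℝ π_j(x)·π_k(x)·w(x) dx = δ_{jk} for 0 ≤ j, k ≤ n−1. Then the Hankel-type multiple integral satisfies (1/n!) ∫_{ℝⁿ} ∏_{1≤j<k≤n} (x_k − x_j)² · ∏_{m=1}^{n} w(x_m) dx₁…dxₙ = ∏_{j=0}^{n−1} ς_j^{−2}. -/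
open MeasureTheory Finset


lemma prod_pairs_aux {M : Type*} [CommMonoid M] {n : ℕ} (f : Fin n → Fin n → M) :
    (∏ p ∈ Finset.univ.filter (fun p : Fin n × Fin n => p.1 < p.2), f p.1 p.2)
      = ∏ i, ∏ j ∈ Finset.Ioi i, f i j := by
  rw [Finset.prod_sigma']
  refine Finset.prod_nbij' (fun p => ⟨p.1, p.2⟩) (fun p => (p.1, p.2)) ?_ ?_ ?_ ?_ ?_ <;>
    simp [Finset.mem_filter, Finset.mem_sigma, Finset.mem_Ioi]

lemma integrable_poly_mul {w : ℝ → ℂ} (hw : Measurable w)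
    (hmom : ∀ m : ℕ, Integrable (fun x : ℝ => |x| ^ m * ‖w x‖))
    (q : Polynomial ℂ) : Integrable (fun t : ℝ => q.eval (t : ℂ) * w t) := by
  have hmeas : AEStronglyMeasurable (fun t : ℝ => q.eval (t : ℂ) * w t) volume := by
    exact (((q.continuous_aeval).comp Complex.continuous_ofReal).measurable.mul hw).aestronglyMeasurable
  refine Integrable.mono'
    (g := fun t => ∑ k ∈ Finset.range (q.natDegree + 1),
        ‖q.coeff k‖ * (|t| ^ k * ‖w t‖))
    (integrable_finset_sum _ (fun k _ => (hmom k).const_mul _)) hmeas ?_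
  filter_upwards with t
  rw [norm_mul]
  calc ‖q.eval (t:ℂ)‖ * ‖w t‖
      ≤ (∑ k ∈ Finset.range (q.natDegree + 1), ‖q.coeff k‖ * |t| ^ k) * ‖w t‖ := by
        gcongr
        rw [q.eval_eq_sum_range]
        refine (norm_sum_le _ _).trans ?_
        apply Finset.sum_le_sum
        intro k _
        rw [norm_mul, norm_pow, Complex.norm_real, Real.norm_eq_abs]
    _ = _ := by
        rw [Finset.sum_mul]
        exact Finset.sum_congr rfl fun k _ => by ring


/-- Normalization of the Hankel-type multiple integral: for a weight `w` with all
moments finite and orthonormal polynomials `π₀, …, π_{n-1}` (with `deg π_j = j` and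
nonzero leading coefficients `ς_j`),
`(1/n!) ∫_{ℝⁿ} ∏_{j<k}(x_k - x_j)² ∏_m w(x_m) dx = ∏_j ς_j⁻²`. -/
theorem hankel_integral_normalization (n : ℕ) (hn : 1 ≤ n)
    (w : ℝ → ℂ) (hw : Measurable w)
    (hmom : ∀ m : ℕ, Integrable (fun x : ℝ => |x| ^ m * ‖w x‖))
    (P : Fin n → Polynomial ℂ)
    (hdeg : ∀ j : Fin n, (P j).natDegree = (j : ℕ))
    (hlead : ∀ j : Fin n, (P j).leadingCoeff ≠ 0)
    (horth : ∀ j k : Fin n,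
      (∫ x : ℝ, (P j).eval (x : ℂ) * (P k).eval (x : ℂ) * w x)
        = if j = k then 1 else 0) :
    (1 / (n.factorial : ℂ)) *
      (∫ x : Fin n → ℝ,
        ((∏ p ∈ Finset.univ.filter (fun p : Fin n × Fin n => p.1 < p.2),
            (x p.2 - x p.1) ^ 2 : ℝ) : ℂ)
          * ∏ m : Fin n, w (x m))
      = ∏ j : Fin n, ((P j).leadingCoeff ^ 2)⁻¹ := by
  classical
  set S : ℂ := ∏ j : Fin n, (P j).leadingCoeff with hS
  have hSne : S ≠ 0 := Finset.prod_ne_zero_iff.mpr fun j _ => hlead j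
  set D : (Fin n → ℝ) → ℂ :=
    fun x => (Matrix.of fun i j : Fin n => (P j).eval ((x i : ℂ))).det with hD
  -- relation to Vandermonde determinant
  have hVD : ∀ x : Fin n → ℝ,
      D x = (Matrix.vandermonde fun i => ((x i : ℂ))).det * S := by
    intro x
    simp only [hD]
    rw [Matrix.eval_matrixOfPolynomials_eq_vandermonde_mul_matrixOfPolynomials
      (fun i => ((x i : ℂ))) P (fun i => (hdeg i).le), Matrix.det_mul]
    congr 1
    rw [Matrix.det_of_upperTriangular
      (Matrix.matrixOfPolynomials_blockTriangular P (fun i => (hdeg i).le))]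
    refine Finset.prod_congr rfl fun i _ => ?_
    show (P i).coeff (i : ℕ) = (P i).leadingCoeff
    rw [← hdeg i]
    exact Polynomial.coeff_natDegree
  -- pointwise identity for the integrand
  have hpt : ∀ x : Fin n → ℝ,
      ((∏ p ∈ Finset.univ.filter (fun p : Fin n × Fin n => p.1 < p.2),
          (x p.2 - x p.1) ^ 2 : ℝ) : ℂ) * ∏ m : Fin n, w (x m)
        = (S ^ 2)⁻¹ * ((D x) ^ 2 * ∏ m : Fin n, w (x m)) := by
    intro x
    have h1 : ((∏ p ∈ Finset.univ.filter (fun p : Fin n × Fin n => p.1 < p.2),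
          (x p.2 - x p.1) ^ 2 : ℝ) : ℂ)
        = ((Matrix.vandermonde fun i => ((x i : ℂ))).det) ^ 2 := by
      push_cast
      rw [Finset.prod_pow, prod_pairs_aux (fun i j : Fin n => ((x j : ℂ) - x i)),
        Matrix.det_vandermonde]
    rw [h1, hVD x]
    field_simp
  -- determinant expansion
  have hDx : ∀ x : Fin n → ℝ,
      D x = ∑ σ : Equiv.Perm (Fin n),
        ((Equiv.Perm.sign σ : ℤ) : ℂ) * ∏ i, (P (σ i)).eval ((x i : ℂ)) := by
    intro x
    simp only [hD]
    rw [← Matrix.det_transpose, Matrix.det_apply']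
    rfl
  have hexp : ∀ x : Fin n → ℝ,
      (D x) ^ 2 * ∏ m : Fin n, w (x m)
        = ∑ σ : Equiv.Perm (Fin n), ∑ τ : Equiv.Perm (Fin n),
            (((Equiv.Perm.sign σ : ℤ) : ℂ) * ((Equiv.Perm.sign τ : ℤ) : ℂ)) *
              ∏ i, ((P (σ i)).eval ((x i : ℂ)) * (P (τ i)).eval ((x i : ℂ)) * w (x i)) := by
    intro x
    rw [sq, hDx x, Finset.sum_mul_sum, Finset.sum_mul]
    refine Finset.sum_congr rfl fun σ _ => ?_
    rw [Finset.sum_mul]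
    refine Finset.sum_congr rfl fun τ _ => ?_
    rw [Finset.prod_mul_distrib, Finset.prod_mul_distrib]
    ring
  have hint : ∀ σ τ : Equiv.Perm (Fin n), Integrable (fun x : Fin n → ℝ =>
      ∏ i, ((P (σ i)).eval ((x i : ℂ)) * (P (τ i)).eval ((x i : ℂ)) * w (x i))) := by
    intro σ τ
    apply Integrable.fintype_prod
      (f := fun i (t : ℝ) => (P (σ i)).eval ((t : ℂ)) * (P (τ i)).eval ((t : ℂ)) * w t)
    intro i
    have := integrable_poly_mul hw hmom ((P (σ i)) * (P (τ i)))
    simpa [Polynomial.eval_mul] using this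
  have hone : ∀ σ τ : Equiv.Perm (Fin n),
      (∫ x : Fin n → ℝ,
          ∏ i, ((P (σ i)).eval ((x i : ℂ)) * (P (τ i)).eval ((x i : ℂ)) * w (x i)))
        = if σ = τ then 1 else 0 := by
    intro σ τ
    rw [MeasureTheory.integral_fintype_prod_volume_eq_prod
      (f := fun i (t : ℝ) => (P (σ i)).eval ((t : ℂ)) * (P (τ i)).eval ((t : ℂ)) * w t)]
    by_cases h : σ = τ
    · subst h; simp [horth]
    · obtain ⟨i, hi⟩ : ∃ i, σ i ≠ τ i := by
        by_contra hc; push_neg at hc; exact h (Equiv.ext hc)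
      rw [if_neg h]
      exact Finset.prod_eq_zero (Finset.mem_univ i) (by rw [horth, if_neg hi])
  have key : (∫ x : Fin n → ℝ, (D x) ^ 2 * ∏ m : Fin n, w (x m))
      = (n.factorial : ℂ) := by
    calc (∫ x : Fin n → ℝ, (D x) ^ 2 * ∏ m : Fin n, w (x m))
        = ∫ x : Fin n → ℝ, ∑ σ : Equiv.Perm (Fin n), ∑ τ : Equiv.Perm (Fin n),
            (((Equiv.Perm.sign σ : ℤ) : ℂ) * ((Equiv.Perm.sign τ : ℤ) : ℂ)) *
              ∏ i, ((P (σ i)).eval ((x i : ℂ)) * (P (τ i)).eval ((x i : ℂ)) * w (x i)) := by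
          simp_rw [hexp]
      _ = ∑ σ : Equiv.Perm (Fin n), ∑ τ : Equiv.Perm (Fin n),
            ∫ x : Fin n → ℝ,
            (((Equiv.Perm.sign σ : ℤ) : ℂ) * ((Equiv.Perm.sign τ : ℤ) : ℂ)) *
              ∏ i, ((P (σ i)).eval ((x i : ℂ)) * (P (τ i)).eval ((x i : ℂ)) * w (x i)) := by
          rw [integral_finset_sum _
            (fun σ _ => integrable_finset_sum _ (fun τ _ => (hint σ τ).const_mul _))]
          exact Finset.sum_congr rfl fun σ _ =>
            integral_finset_sum _ (fun τ _ => (hint σ τ).const_mul _)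
      _ = ∑ σ : Equiv.Perm (Fin n), ∑ τ : Equiv.Perm (Fin n),
            (((Equiv.Perm.sign σ : ℤ) : ℂ) * ((Equiv.Perm.sign τ : ℤ) : ℂ)) *
              (if σ = τ then 1 else 0) := by
          refine Finset.sum_congr rfl fun σ _ => Finset.sum_congr rfl fun τ _ => ?_
          rw [MeasureTheory.integral_const_mul, hone σ τ]
      _ = ∑ σ : Equiv.Perm (Fin n), (1 : ℂ) := by
          refine Finset.sum_congr rfl fun σ _ => ?_
          rw [Finset.sum_eq_single σ]
          · rw [if_pos rfl, mul_one, ← Int.cast_mul, ← Units.val_mul, Int.units_mul_self]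
            simp
          · intro τ _ hτ; rw [if_neg (Ne.symm hτ), mul_zero]
          · intro h; exact absurd (Finset.mem_univ σ) h
      _ = (n.factorial : ℂ) := by
          simp [Finset.card_univ, Fintype.card_perm, Fintype.card_fin]
  have hI : (∫ x : Fin n → ℝ,
        ((∏ p ∈ Finset.univ.filter (fun p : Fin n × Fin n => p.1 < p.2),
            (x p.2 - x p.1) ^ 2 : ℝ) : ℂ)
          * ∏ m : Fin n, w (x m))
      = (S ^ 2)⁻¹ * (n.factorial : ℂ) := by
    simp_rw [hpt]
    rw [MeasureTheory.integral_const_mul, key]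
  rw [hI]
  have h2 : ∏ j : Fin n, ((P j).leadingCoeff ^ 2)⁻¹ = (S ^ 2)⁻¹ := by
    rw [hS, ← Finset.prod_pow, Finset.prod_inv_distrib]
  rw [h2]
  have hfac : (n.factorial : ℂ) ≠ 0 := Nat.cast_ne_zero.mpr n.factorial_ne_zero
  field_simp
end

section
/- Let h be real analytic and strictly positive on a neighbourhood of [√2, √2 + δ₀] for some δ₀ > 0, and for z ∈ (√2, √2 + δ₀) define F(z) := ( (3π/2) ∫_{√2}^{z} h(w)·√(w² − 2) dw )^{2/3} (a real 2/3 power of a positive number). Then there exist ε > 0 and a holomorphic function G on the complex disk { ζ : |ζ − √2| < ε } such that: G(z) = F(z) for all real z ∈ (√2, √2 + ε); G(√2) = 0; G′(√2) = √2·(π·h(√2))^{2/3}, in particular G′(√2) ≠ 0 so G is conformal at √2; and G″(√2) = 2·√2·(π·h(√2))^{2/3}·(2/5)·( h′(√2)/h(√2) + 1/(4√2) ). -/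
open MeasureTheory Set

open MeasureTheory Set ENNReal NNReal intervalIntegral

lemma cexp_twothirds_log {P : ℝ} (hP : 0 < P) :
    Complex.exp ((2/3 : ℂ) * Complex.log (P : ℂ)) = ((P ^ ((2:ℝ)/3) : ℝ) : ℂ) := by
  rw [← Complex.ofReal_log hP.le, Real.rpow_def_of_pos hP]
  rw [show (2/3 : ℂ) * ((Real.log P : ℝ):ℂ) = ((Real.log P * (2/3) : ℝ):ℂ) by push_cast; ring,
    Complex.ofReal_exp]

lemma rpow_three_halves {t : ℝ} (ht : 0 < t) : t * Real.sqrt t = t ^ ((3:ℝ)/2) := by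
  have h32 : t ^ ((3:ℝ)/2) = t ^ ((1:ℝ)/2) * t ^ (1:ℝ) := by
    rw [← Real.rpow_add ht]; norm_num
  rw [h32, Real.rpow_one, Real.sqrt_eq_rpow]; ring

noncomputable def csqrt (z : ℂ) : ℂ := Complex.exp (Complex.log z / 2)

lemma csqrt_ofReal {x : ℝ} (hx : 0 < x) : csqrt x = (Real.sqrt x : ℂ) := by
  have : Real.sqrt x = Real.exp (Real.log x / 2) := by
    rw [Real.sqrt_eq_rpow, Real.rpow_def_of_pos hx]; ring_nf
  rw [csqrt, ← Complex.ofReal_log hx.le, this]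
  push_cast
  ring_nf

lemma csqrt_hasDerivAt {z : ℂ} (hz : z ∈ Complex.slitPlane) :
    HasDerivAt csqrt (csqrt z / (2 * z)) z := by
  have h0 : z ≠ 0 := Complex.slitPlane_ne_zero hz
  have := (Complex.hasDerivAt_exp (Complex.log z / 2)).comp z
    ((Complex.hasDerivAt_log hz).div_const 2)
  refine this.congr_deriv ?_
  rw [csqrt]
  field_simp

lemma int_sqrt : ∫ s in (0:ℝ)..1, Real.sqrt s = 2/3 := by
  have : ∀ s ∈ uIcc (0:ℝ) 1, Real.sqrt s = s ^ ((1:ℝ)/2) := by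
    intro s hs
    rw [Set.uIcc_of_le (by norm_num)] at hs
    rw [Real.sqrt_eq_rpow]
  rw [intervalIntegral.integral_congr this, integral_rpow (Or.inl (by norm_num))]
  norm_num [Real.one_rpow, Real.zero_rpow]

lemma int_sqrt_mul : ∫ s in (0:ℝ)..1, Real.sqrt s * s = 2/5 := by
  have : ∀ s ∈ uIcc (0:ℝ) 1, Real.sqrt s * s = s ^ ((3:ℝ)/2) := by
    intro s hs
    rw [Set.uIcc_of_le (by norm_num)] at hs
    rcases eq_or_lt_of_le hs.1 with h | h
    · simp [← h, Real.zero_rpow (by norm_num : (3:ℝ)/2 ≠ 0)]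
    · have h32 : s ^ ((3:ℝ)/2) = s ^ ((1:ℝ)/2) * s ^ (1:ℝ) := by
        rw [← Real.rpow_add h]; norm_num
      rw [Real.sqrt_eq_rpow, h32, Real.rpow_one]
  rw [intervalIntegral.integral_congr this, integral_rpow (Or.inl (by norm_num))]
  norm_num [Real.one_rpow, Real.zero_rpow]

lemma paramB_hasDerivAt (A : ℂ → ℂ) (c : ℂ) (ρ : ℝ)
    (hA : DifferentiableOn ℂ A (Metric.ball c ρ)) (ζ₀ : ℂ) (hζ₀ : ‖ζ₀‖ < ρ / 2) :
    HasDerivAt (fun ζ : ℂ => ∫ s in (0:ℝ)..1, (Real.sqrt s : ℂ) * A (c + s * ζ))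
      (∫ s in (0:ℝ)..1, (Real.sqrt s : ℂ) * (s * deriv A (c + s * ζ₀))) ζ₀ := by
  have hρ : 0 < ρ := by linarith [norm_nonneg ζ₀]
  have hball : IsOpen (Metric.ball c ρ) := Metric.isOpen_ball
  have hAan : AnalyticOnNhd ℂ A (Metric.ball c ρ) := hA.analyticOnNhd hball
  have hA' : AnalyticOnNhd ℂ (deriv A) (Metric.ball c ρ) := hAan.deriv
  have hA'cont : ContinuousOn (deriv A) (Metric.ball c ρ) := hA'.continuousOn
  -- membership helpers
  have hmem : ∀ (t : ℝ), t ∈ Icc (0:ℝ) 1 → ∀ x : ℂ, ‖x‖ < ρ / 2 →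
      c + t * x ∈ Metric.ball c ρ := by
    intro t ht x hx
    simp only [Metric.mem_ball, dist_eq_norm]
    have : ‖c + t * x - c‖ = ‖(t:ℂ) * x‖ := by ring_nf
    rw [this, norm_mul]
    have h1 : ‖(t:ℂ)‖ ≤ 1 := by
      rw [Complex.norm_real, Real.norm_eq_abs, abs_of_nonneg ht.1]; exact ht.2
    nlinarith [norm_nonneg x, norm_nonneg (t:ℂ)]
  -- bound on the closed ball of radius ρ/2
  obtain ⟨M, hM⟩ : ∃ M, ∀ z ∈ Metric.closedBall c (ρ/2), ‖deriv A z‖ ≤ M := by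
    obtain ⟨M, hM⟩ := (isCompact_closedBall c (ρ/2)).exists_bound_of_continuousOn
      (hA'cont.mono (fun z hz => lt_of_le_of_lt (Metric.mem_closedBall.mp hz) (by linarith)))
    exact ⟨M, hM⟩
  have hM0 : 0 ≤ M :=
    le_trans (norm_nonneg _) (hM c (Metric.mem_closedBall_self (by linarith)))
  set ε : ℝ := ρ/2 - ‖ζ₀‖ with hε
  have hεpos : 0 < ε := by rw [hε]; linarith
  have hmem2 : ∀ x ∈ Metric.ball ζ₀ ε, ‖x‖ < ρ / 2 := by
    intro x hx
    have := Metric.mem_ball.mp hx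
    rw [dist_eq_norm] at this
    calc ‖x‖ ≤ ‖x - ζ₀‖ + ‖ζ₀‖ := by simpa using norm_add_le (x - ζ₀) ζ₀
    _ < ε + ‖ζ₀‖ := by linarith
    _ = ρ/2 := by simp [hε]
  have hcontA : ContinuousOn A (Metric.ball c ρ) := hA.continuousOn
  -- continuity in s of the integrand, for each fixed x with ‖x‖ < ρ/2
  have hFcont : ∀ x : ℂ, ‖x‖ < ρ/2 →
      ContinuousOn (fun s : ℝ => (Real.sqrt s : ℂ) * A (c + s * x)) (Icc (0:ℝ) 1) := by
    intro x hx
    apply ContinuousOn.mul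
    · exact Complex.continuous_ofReal.comp_continuousOn
        (Real.continuous_sqrt.continuousOn)
    · apply hcontA.comp
      · apply ContinuousOn.add continuousOn_const
        exact (Complex.continuous_ofReal.continuousOn.mul continuousOn_const)
      · intro t ht; exact hmem t ht x hx
  have hF'cont : ∀ x : ℂ, ‖x‖ < ρ/2 →
      ContinuousOn (fun s : ℝ => (Real.sqrt s : ℂ) * (s * deriv A (c + s * x)))
        (Icc (0:ℝ) 1) := by
    intro x hx
    apply ContinuousOn.mul
    · exact Complex.continuous_ofReal.comp_continuousOn Real.continuous_sqrt.continuousOn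
    · apply ContinuousOn.mul
      · exact Complex.continuous_ofReal.continuousOn
      · apply (hA'cont.mono (subset_refl _)).comp
        · apply ContinuousOn.add continuousOn_const
          exact (Complex.continuous_ofReal.continuousOn.mul continuousOn_const)
        · intro t ht; exact hmem t ht x hx
  have key := intervalIntegral.hasDerivAt_integral_of_dominated_loc_of_deriv_le
    (F := fun (x : ℂ) (s : ℝ) => (Real.sqrt s : ℂ) * A (c + s * x))
    (F' := fun (x : ℂ) (s : ℝ) => (Real.sqrt s : ℂ) * (s * deriv A (c + s * x)))
    (x₀ := ζ₀) (a := (0:ℝ)) (b := 1) (μ := volume) (bound := fun _ => M)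
    (Metric.ball_mem_nhds ζ₀ hεpos) ?_ ?_ ?_ ?_ ?_ ?_
  · exact key.2
  · -- measurability eventually
    filter_upwards [Metric.ball_mem_nhds ζ₀ hεpos] with x hx
    exact ((hFcont x (hmem2 x hx)).mono
      (by rw [uIoc_of_le (by norm_num : (0:ℝ) ≤ 1)]; exact Ioc_subset_Icc_self)).aestronglyMeasurable
      measurableSet_uIoc
  · exact ((hFcont ζ₀ (by linarith [norm_nonneg ζ₀])).mono
      (by rw [uIcc_of_le (by norm_num : (0:ℝ) ≤ 1)])).intervalIntegrable
  · exact ((hF'cont ζ₀ (by linarith)).mono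
      (by rw [uIoc_of_le (by norm_num : (0:ℝ) ≤ 1)]; exact Ioc_subset_Icc_self)).aestronglyMeasurable
      measurableSet_uIoc
  · -- bound
    filter_upwards with t ht x hx
    rw [uIoc_of_le (by norm_num : (0:ℝ) ≤ 1)] at ht
    have ht' : t ∈ Icc (0:ℝ) 1 := Ioc_subset_Icc_self ht
    have hxρ := hmem2 x hx
    have hmemcb : c + t * x ∈ Metric.closedBall c (ρ/2) := by
      simp only [Metric.mem_closedBall, dist_eq_norm]
      have : ‖c + t * x - c‖ = ‖(t:ℂ) * x‖ := by ring_nf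
      rw [this, norm_mul]
      have h1 : ‖(t:ℂ)‖ ≤ 1 := by
        rw [Complex.norm_real, Real.norm_eq_abs, abs_of_nonneg ht'.1]; exact ht'.2
      nlinarith [norm_nonneg x, norm_nonneg (t:ℂ)]
    calc ‖(Real.sqrt t : ℂ) * (t * deriv A (c + t * x))‖
        = Real.sqrt t * (t * ‖deriv A (c + t * x)‖) := by
          rw [norm_mul, norm_mul, Complex.norm_real, Complex.norm_real,
            Real.norm_eq_abs, Real.norm_eq_abs, abs_of_nonneg (Real.sqrt_nonneg t),
            abs_of_nonneg ht'.1]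
    _ ≤ 1 * (1 * M) := by
        have hs1 : Real.sqrt t ≤ 1 := by
          rw [show (1:ℝ) = Real.sqrt 1 by simp]; exact Real.sqrt_le_sqrt ht'.2
        have hMd := hM _ hmemcb
        have h0 : 0 ≤ ‖deriv A (c + t * x)‖ := norm_nonneg _
        have h2 : t * ‖deriv A (c + t * x)‖ ≤ 1 * M :=
          mul_le_mul ht'.2 hMd h0 zero_le_one
        exact mul_le_mul hs1 (by linarith) (mul_nonneg ht'.1 h0) zero_le_one
    _ = M := by ring
  · exact intervalIntegrable_const
  · -- differentiability in x
    filter_upwards with t ht x hx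
    rw [uIoc_of_le (by norm_num : (0:ℝ) ≤ 1)] at ht
    have ht' : t ∈ Icc (0:ℝ) 1 := Ioc_subset_Icc_self ht
    have hmemb : c + t * x ∈ Metric.ball c ρ := hmem t ht' x (hmem2 x hx)
    have hd : HasDerivAt A (deriv A (c + t * x)) (c + t * x) :=
      ((hA.differentiableAt (hball.mem_nhds hmemb))).hasDerivAt
    have haff : HasDerivAt (fun y : ℂ => c + t * y) (t : ℂ) x := by
      simpa using ((hasDerivAt_id x).const_mul (t:ℂ)).const_add c
    have := (hd.comp x haff).const_mul (Real.sqrt t : ℂ)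
    refine this.congr_deriv ?_
    ring

lemma complexify {f : ℝ → ℝ} {x₀ : ℝ} (hf : AnalyticAt ℝ f x₀) :
    ∃ r : ℝ, 0 < r ∧ ∃ H : ℂ → ℂ,
      DifferentiableOn ℂ H (Metric.ball (x₀ : ℂ) r) ∧
      (∀ t : ℝ, |t - x₀| < r → H t = (f t : ℂ)) ∧
      deriv H (x₀ : ℂ) = ((deriv f x₀ : ℝ) : ℂ) := by
  obtain ⟨p, hp⟩ := hf
  obtain ⟨r0, hr0⟩ := hp
  obtain ⟨r', hr'pos, hr'lt⟩ := ENNReal.lt_iff_exists_nnreal_btwn.mp hr0.r_pos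
  have hr'pos' : 0 < r' := by exact_mod_cast hr'pos
  have hball : HasFPowerSeriesOnBall f p x₀ r' :=
    hr0.mono (by exact_mod_cast hr'pos) hr'lt.le
  set q : FormalMultilinearSeries ℂ ℂ ℂ :=
    FormalMultilinearSeries.ofScalars ℂ (fun n => (p.coeff n : ℂ)) with hqdef
  have hqnorm : ∀ n, ‖q n‖ = ‖p n‖ := by
    intro n
    rw [hqdef, FormalMultilinearSeries.ofScalars_norm,
      p.norm_apply_eq_norm_coef]
    simp
  have hqcoeff : ∀ n, q.coeff n = (p.coeff n : ℂ) := by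
    intro n
    rw [FormalMultilinearSeries.coeff, hqdef, FormalMultilinearSeries.ofScalars]
    simp [show (1 : Fin n → ℂ) = fun _ => (1:ℂ) from rfl, List.ofFn_const]
  have hrad : (r' : ℝ≥0∞) ≤ q.radius := by
    obtain ⟨C, hC0, hC⟩ := p.norm_mul_pow_le_of_lt_radius
      (lt_of_lt_of_le hr'lt hr0.r_le)
    apply q.le_radius_of_bound C
    intro n
    rw [hqnorm]
    exact hC n
  have hq : HasFPowerSeriesOnBall q.sum q 0 q.radius :=
    q.hasFPowerSeriesOnBall (lt_of_lt_of_le (by exact_mod_cast hr'pos) hrad)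
  set H : ℂ → ℂ := fun z => q.sum (z - x₀) with hHdef
  have hH : HasFPowerSeriesOnBall H q (x₀ : ℂ) r' := by
    refine ⟨hrad, by exact_mod_cast hr'pos, ?_⟩
    intro y hy
    have hy' : y ∈ EMetric.ball (0 : ℂ) q.radius :=
      lt_of_lt_of_le hy hrad
    have := hq.hasSum hy'
    simpa [hHdef] using this
  refine ⟨r', by exact_mod_cast hr'pos, H, ?_, ?_, ?_⟩
  · have := hH.differentiableOn
    rwa [Metric.emetric_ball_nnreal] at this
  · intro t ht
    have htC : ((t : ℂ) - (x₀ : ℂ)) ∈ Metric.eball (0 : ℂ) r' := by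
      rw [mem_eball_zero_iff]
      have : ‖((t : ℂ) - (x₀ : ℂ))‖₊ = ‖t - x₀‖₊ := by
        rw [← Complex.ofReal_sub, Complex.nnnorm_real]
      rw [enorm_eq_nnnorm, this]
      exact_mod_cast (by rwa [← Real.norm_eq_abs] at ht :
        ‖t - x₀‖ < (r' : ℝ))
    have htR : (t - x₀) ∈ Metric.eball (0 : ℝ) r' := by
      rw [mem_eball_zero_iff]
      exact_mod_cast (by rwa [← Real.norm_eq_abs] at ht : ‖t - x₀‖ < (r' : ℝ))
    have hsC := hH.hasSum htC
    have hsR := hball.hasSum htR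
    rw [show x₀ + (t - x₀) = t by ring] at hsR
    rw [show (x₀ : ℂ) + ((t : ℂ) - x₀) = (t : ℂ) by ring] at hsC
    have hsR' := hsR.mapL Complex.ofRealCLM
    have : (fun n => Complex.ofRealCLM (p n fun _ => (t - x₀))) =
        (fun n => q n fun _ => ((t : ℂ) - x₀)) := by
      funext n
      rw [FormalMultilinearSeries.apply_eq_pow_smul_coeff, hqdef,
        FormalMultilinearSeries.ofScalars_apply_eq]
      simp only [Complex.ofRealCLM_apply, smul_eq_mul]
      push_cast
      ring
    rw [this] at hsR'
    exact hsC.unique hsR'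
  · rw [hH.hasFPowerSeriesAt.deriv, hball.hasFPowerSeriesAt.deriv]
    exact hqcoeff 1


set_option maxHeartbeats 1600000 in
/-- The conformal map at the soft edge: if `h` is real analytic and strictly positive
on a neighbourhood of `[√2, √2 + δ₀]`, then the function
`F(z) = ((3π/2) ∫_{√2}^z h(w)√(w²-2) dw)^{2/3}` on `(√2, √2 + δ₀)` extends to a
holomorphic function `G` on a complex disk around `√2` with `G(√2) = 0`,
`G'(√2) = √2 (π h(√2))^{2/3} ≠ 0` (so `G` is conformal at `√2`), and
`G''(√2) = 2√2 (π h(√2))^{2/3} (2/5) (h'(√2)/h(√2) + 1/(4√2))`. -/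
theorem edge_conformal_map (δ₀ : ℝ) (hδ : 0 < δ₀) (h : ℝ → ℝ)
    (hreg : ∃ U : Set ℝ, IsOpen U ∧ Icc (Real.sqrt 2) (Real.sqrt 2 + δ₀) ⊆ U ∧
      AnalyticOnNhd ℝ h U ∧ ∀ x ∈ U, 0 < h x) :
    ∃ ε > (0 : ℝ), ∃ G : ℂ → ℂ,
      DifferentiableOn ℂ G (Metric.ball ((Real.sqrt 2 : ℝ) : ℂ) ε) ∧
      (∀ z : ℝ, z ∈ Ioo (Real.sqrt 2) (Real.sqrt 2 + ε) →
        G (z : ℂ)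
          = ((((3 * Real.pi / 2) *
                ∫ w in (Real.sqrt 2)..z, h w * Real.sqrt (w ^ 2 - 2)) ^ ((2 : ℝ) / 3)
              : ℝ) : ℂ)) ∧
      G ((Real.sqrt 2 : ℝ) : ℂ) = 0 ∧
      deriv G ((Real.sqrt 2 : ℝ) : ℂ)
        = ((Real.sqrt 2 * (Real.pi * h (Real.sqrt 2)) ^ ((2 : ℝ) / 3) : ℝ) : ℂ) ∧
      deriv G ((Real.sqrt 2 : ℝ) : ℂ) ≠ 0 ∧
      deriv (deriv G) ((Real.sqrt 2 : ℝ) : ℂ)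
        = ((2 * Real.sqrt 2 * (Real.pi * h (Real.sqrt 2)) ^ ((2 : ℝ) / 3) * (2 / 5)
            * (deriv h (Real.sqrt 2) / h (Real.sqrt 2) + 1 / (4 * Real.sqrt 2))
            : ℝ) : ℂ) := by
  obtain ⟨U, hUopen, hUsub, hUan, hUpos⟩ := hreg
  set s2 : ℝ := Real.sqrt 2 with hs2def
  have hs2pos : 0 < s2 := Real.sqrt_pos.mpr (by norm_num)
  have hs2sq : s2 ^ 2 = 2 := Real.sq_sqrt (by norm_num)
  have hs2U : s2 ∈ U := hUsub (left_mem_Icc.mpr (by linarith))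
  have h₀pos : 0 < h s2 := hUpos s2 hs2U
  have hπ : 0 < Real.pi := Real.pi_pos
  obtain ⟨r, hrpos, H, Hdiff, Hreal, Hderiv⟩ := complexify (hUan s2 hs2U)
  set σ : ℝ := Real.sqrt (2 * s2) with hσdef
  have hσpos : 0 < σ := Real.sqrt_pos.mpr (by positivity)
  set ρ : ℝ := min r s2 with hρdef
  have hρpos : 0 < ρ := lt_min hrpos hs2pos
  have hρr : ρ ≤ r := min_le_left _ _
  have hρs2 : ρ ≤ s2 := min_le_right _ _
  set Ac : ℂ → ℂ := fun z => H z * csqrt (z + ((s2:ℝ):ℂ)) with hAcdef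
  have hslit : ∀ z : ℂ, z ∈ Metric.ball ((s2:ℝ):ℂ) ρ →
      z + ((s2:ℝ):ℂ) ∈ Complex.slitPlane := by
    intro z hz
    rw [Metric.mem_ball, dist_eq_norm] at hz
    rw [Complex.mem_slitPlane_iff]
    left
    have h1 : |(z - ((s2:ℝ):ℂ)).re| ≤ ‖z - ((s2:ℝ):ℂ)‖ := Complex.abs_re_le_norm _
    have h2 : (z - ((s2:ℝ):ℂ)).re = z.re - s2 := by simp
    have h3 : (z + ((s2:ℝ):ℂ)).re = z.re + s2 := by simp
    rw [h3]
    rw [h2] at h1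
    cases' abs_le.mp h1 with h4 h5
    linarith
  have hAdiff : DifferentiableOn ℂ Ac (Metric.ball ((s2:ℝ):ℂ) ρ) := by
    intro z hz
    have hz' : z ∈ Metric.ball ((s2:ℝ):ℂ) r := by
      rw [Metric.mem_ball] at hz ⊢
      linarith
    have h1 : DifferentiableAt ℂ H z :=
      Hdiff.differentiableAt (Metric.isOpen_ball.mem_nhds hz')
    have h2 : DifferentiableAt ℂ (fun w => csqrt (w + ((s2:ℝ):ℂ))) z :=
      (HasDerivAt.comp (h₂ := csqrt) z (csqrt_hasDerivAt (hslit z hz))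
        ((hasDerivAt_id' z).add_const ((s2:ℝ):ℂ))).differentiableAt
    exact (h1.mul h2).differentiableWithinAt
  have hHs2 : H ((s2:ℝ):ℂ) = ((h s2 : ℝ):ℂ) := Hreal s2 (by simpa using hrpos)
  have hcast2 : ((s2:ℝ):ℂ) + ((s2:ℝ):ℂ) = ((2 * s2 : ℝ):ℂ) := by push_cast; ring
  have hcsqrt2 : csqrt (((s2:ℝ):ℂ) + ((s2:ℝ):ℂ)) = ((σ : ℝ):ℂ) := by
    rw [hcast2, csqrt_ofReal (by positivity), hσdef]
  have hAval : Ac ((s2:ℝ):ℂ) = ((h s2 * σ : ℝ):ℂ) := by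
    rw [hAcdef]
    simp only
    rw [hHs2, hcsqrt2]
    push_cast; ring
  set DA : ℝ := deriv h s2 * σ + h s2 * (σ / (4 * s2)) with hDAdef
  have hs2ball : ((s2:ℝ):ℂ) ∈ Metric.ball ((s2:ℝ):ℂ) ρ := Metric.mem_ball_self hρpos
  have hHd : HasDerivAt H ((deriv h s2 : ℝ) : ℂ) ((s2:ℝ):ℂ) := by
    have h1 : DifferentiableAt ℂ H ((s2:ℝ):ℂ) :=
      Hdiff.differentiableAt (Metric.isOpen_ball.mem_nhds (Metric.mem_ball_self hrpos))
    have h2 := h1.hasDerivAt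
    rwa [Hderiv] at h2
  have hDA : HasDerivAt Ac ((DA : ℝ) : ℂ) ((s2:ℝ):ℂ) := by
    have hin : HasDerivAt (fun w : ℂ => w + ((s2:ℝ):ℂ)) 1 ((s2:ℝ):ℂ) :=
      (hasDerivAt_id _).add_const _
    have h2' := HasDerivAt.comp_of_eq (h₂ := csqrt) (h := fun w : ℂ => w + ((s2:ℝ):ℂ))
      ((s2:ℝ):ℂ) (csqrt_hasDerivAt (hslit _ hs2ball)) hin rfl
    have h2 : HasDerivAt (fun w : ℂ => csqrt (w + ((s2:ℝ):ℂ)))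
        (csqrt (((s2:ℝ):ℂ) + ((s2:ℝ):ℂ)) / (2 * (((s2:ℝ):ℂ) + ((s2:ℝ):ℂ)))) ((s2:ℝ):ℂ) := by
      rw [mul_one] at h2'; exact h2'
    have h3 := hHd.mul h2
    rw [hHs2, hcsqrt2, hcast2] at h3
    refine h3.congr_deriv ?_
    rw [hDAdef]
    have hne : ((2 * s2 : ℝ):ℂ) ≠ 0 := by
      exact_mod_cast Complex.ofReal_ne_zero.mpr (by positivity)
    have hs2ne : ((s2:ℝ):ℂ) ≠ 0 := Complex.ofReal_ne_zero.mpr hs2pos.ne'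
    push_cast
    field_simp
    ring
  set B : ℂ → ℂ := fun ζ => ∫ s in (0:ℝ)..1, (Real.sqrt s : ℂ) * Ac (((s2:ℝ):ℂ) + s * ζ)
    with hBdef
  set dB : ℂ → ℂ := fun ζ =>
    ∫ s in (0:ℝ)..1, (Real.sqrt s : ℂ) * (s * deriv Ac (((s2:ℝ):ℂ) + s * ζ)) with hdBdef
  have hB : ∀ ζ : ℂ, ‖ζ‖ < ρ/2 → HasDerivAt B (dB ζ) ζ := fun ζ hζ =>
    paramB_hasDerivAt Ac _ ρ hAdiff ζ hζ
  have hB0 : B 0 = ((2/3 : ℝ):ℂ) * ((h s2 * σ : ℝ):ℂ) := by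
    rw [hBdef]
    simp only [mul_zero, add_zero]
    rw [intervalIntegral.integral_mul_const, intervalIntegral.integral_ofReal, int_sqrt, hAval]
  have hdB0 : dB 0 = ((2/5 : ℝ):ℂ) * ((DA : ℝ):ℂ) := by
    rw [hdBdef]
    simp only [mul_zero, add_zero]
    have hcongr : ∀ s ∈ uIcc (0:ℝ) 1, (Real.sqrt s : ℂ) * ((s:ℝ) * deriv Ac ((s2:ℝ):ℂ))
        = ((Real.sqrt s * s : ℝ):ℂ) * deriv Ac ((s2:ℝ):ℂ) := by
      intro s _; push_cast; ring
    rw [intervalIntegral.integral_congr hcongr, intervalIntegral.integral_mul_const,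
      intervalIntegral.integral_ofReal, int_sqrt_mul, hDA.deriv]
  set Br : ℝ → ℝ := fun t => ∫ s in (0:ℝ)..1,
      Real.sqrt s * (h (s2 + s * t) * Real.sqrt ((s2 + s * t) + s2)) with hBrdef
  have hBreal : ∀ t : ℝ, |t| < ρ → B ((t:ℝ):ℂ) = ((Br t : ℝ):ℂ) := by
    intro t ht
    rw [hBdef, hBrdef]
    simp only
    have hcongr : ∀ s ∈ uIcc (0:ℝ) 1,
        (Real.sqrt s : ℂ) * Ac (((s2:ℝ):ℂ) + s * ((t:ℝ):ℂ))
        = ((Real.sqrt s * (h (s2 + s*t) * Real.sqrt ((s2 + s*t) + s2)) : ℝ):ℂ) := by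
      intro s hs
      rw [uIcc_of_le (by norm_num : (0:ℝ) ≤ 1)] at hs
      have hst : |s * t| ≤ |t| := by
        rw [abs_mul, abs_of_nonneg hs.1]
        nlinarith [abs_nonneg t, mul_nonneg (sub_nonneg.mpr hs.2) (abs_nonneg t)]
      have hx : |s2 + s*t - s2| < ρ := by
        rw [show s2 + s*t - s2 = s*t by ring]
        exact lt_of_le_of_lt hst ht
      have hxr : |s2 + s*t - s2| < r := lt_of_lt_of_le hx hρr
      have hcast : (((s2:ℝ)):ℂ) + (s:ℝ) * ((t:ℝ):ℂ) = ((s2 + s*t : ℝ):ℂ) := by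
        push_cast; ring
      have hpos : 0 < (s2 + s*t) + s2 := by
        have h1 := (abs_lt.mp (lt_of_le_of_lt hst ht)).1
        linarith
      rw [hcast, hAcdef]
      simp only
      rw [Hreal _ hxr]
      rw [show ((s2 + s*t : ℝ):ℂ) + ((s2:ℝ):ℂ) = (((s2 + s*t) + s2 : ℝ):ℂ) by push_cast; ring,
        csqrt_ofReal hpos]
      push_cast; ring
    rw [intervalIntegral.integral_congr hcongr, intervalIntegral.integral_ofReal]
  have hBcont : ContinuousAt B 0 := by
    have := hB 0 (by simpa using half_pos hρpos)
    exact this.continuousAt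
  have hB0re : 0 < (B 0).re := by
    rw [hB0, ← Complex.ofReal_mul, Complex.ofReal_re]
    positivity
  have hev : ∀ᶠ ζ in nhds (0:ℂ), 0 < (B ζ).re := by
    have hc : ContinuousAt (fun ζ => (B ζ).re) 0 :=
      Complex.continuous_re.continuousAt.comp hBcont
    exact hc.eventually (eventually_gt_nhds hB0re)
  obtain ⟨ε₁, hε₁pos, hε₁⟩ := Metric.eventually_nhds_iff.mp hev
  set ε : ℝ := min (min ε₁ (ρ/2)) δ₀ with hεdef
  have hεpos : 0 < ε := lt_min (lt_min hε₁pos (half_pos hρpos)) hδ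
  have hεε₁ : ε ≤ ε₁ := le_trans (min_le_left _ _) (min_le_left _ _)
  have hερ2 : ε ≤ ρ/2 := le_trans (min_le_left _ _) (min_le_right _ _)
  have hεδ : ε ≤ δ₀ := min_le_right _ _
  have hBpos : ∀ ζ : ℂ, ζ ∈ Metric.ball (0:ℂ) ε → 0 < (B ζ).re := by
    intro ζ hζ
    apply hε₁
    rw [Metric.mem_ball] at hζ
    exact lt_of_lt_of_le hζ hεε₁
  set u : ℂ → ℂ := fun ζ => ((3 * Real.pi / 2 : ℝ):ℂ) * B ζ with hudef
  have hslitu : ∀ ζ ∈ Metric.ball (0:ℂ) ε, u ζ ∈ Complex.slitPlane := by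
    intro ζ hζ
    rw [Complex.mem_slitPlane_iff]
    left
    rw [hudef]
    simp only
    rw [Complex.re_ofReal_mul]
    have := hBpos ζ hζ
    positivity
  set C : ℂ → ℂ := fun ζ => Complex.exp ((2/3 : ℂ) * Complex.log (u ζ)) with hCdef
  have hCd : ∀ ζ ∈ Metric.ball (0:ℂ) ε, HasDerivAt C
      (C ζ * ((2/3 : ℂ) * ((u ζ)⁻¹ * (((3 * Real.pi / 2 : ℝ):ℂ) * dB ζ)))) ζ := by
    intro ζ hζ
    have hbd : ‖ζ‖ < ρ/2 := lt_of_lt_of_le (mem_ball_zero_iff.mp hζ) hερ2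
    have h1 : HasDerivAt u (((3 * Real.pi / 2 : ℝ):ℂ) * dB ζ) ζ := (hB ζ hbd).const_mul _
    have h2 := (Complex.hasDerivAt_log (hslitu ζ hζ)).comp ζ h1
    have h3 := h2.const_mul (2/3 : ℂ)
    have h4 := (Complex.hasDerivAt_exp ((2/3 : ℂ) * Complex.log (u ζ))).comp ζ h3
    exact h4
  set G : ℂ → ℂ := fun z => (z - ((s2:ℝ):ℂ)) * C (z - ((s2:ℝ):ℂ)) with hGdef
  have hshiftmem : ∀ z : ℂ, z ∈ Metric.ball ((s2:ℝ):ℂ) ε →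
      z - ((s2:ℝ):ℂ) ∈ Metric.ball (0:ℂ) ε := by
    intro z hz
    rw [mem_ball_zero_iff]
    rw [Metric.mem_ball, dist_eq_norm] at hz
    exact hz
  -- value of C at 0
  set P : ℝ := Real.pi * (h s2 * σ) with hPdef
  have hPpos : 0 < P := by rw [hPdef]; positivity
  have hu0 : u 0 = ((P : ℝ):ℂ) := by
    rw [hudef]
    simp only
    rw [hB0, hPdef]
    push_cast; ring
  have h232 : (2:ℝ) * s2 = (2:ℝ) ^ ((3:ℝ)/2) := by
    rw [show (3:ℝ)/2 = 1 + 1/2 by norm_num, Real.rpow_add two_pos, Real.rpow_one,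
      ← Real.sqrt_eq_rpow]
  have hσ34 : σ = (2:ℝ) ^ ((3:ℝ)/4) := by
    rw [hσdef, h232, Real.sqrt_eq_rpow, ← Real.rpow_mul (by norm_num : (0:ℝ) ≤ 2)]
    norm_num
  have hσ23 : σ ^ ((2:ℝ)/3) = s2 := by
    rw [hσ34, ← Real.rpow_mul (by norm_num : (0:ℝ) ≤ 2), hs2def, Real.sqrt_eq_rpow]
    norm_num
  have hPval : P ^ ((2:ℝ)/3) = s2 * (Real.pi * h s2) ^ ((2:ℝ)/3) := by
    rw [show P = (Real.pi * h s2) * σ by rw [hPdef]; ring,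
      Real.mul_rpow (by positivity) hσpos.le, hσ23]
    ring
  have hC0 : C 0 = ((s2 * (Real.pi * h s2) ^ ((2:ℝ)/3) : ℝ):ℂ) := by
    rw [hCdef]
    simp only
    rw [hu0, cexp_twothirds_log hPpos, hPval]
  -- product rule for G on the ball
  have hG1 : ∀ z ∈ Metric.ball ((s2:ℝ):ℂ) ε, HasDerivAt G
      (C (z - ((s2:ℝ):ℂ)) + (z - ((s2:ℝ):ℂ)) * deriv C (z - ((s2:ℝ):ℂ))) z := by
    intro z hz
    have hsh : HasDerivAt (fun w : ℂ => w - ((s2:ℝ):ℂ)) 1 z := (hasDerivAt_id z).sub_const _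
    have hC' : HasDerivAt C (deriv C (z - ((s2:ℝ):ℂ))) (z - ((s2:ℝ):ℂ)) :=
      ((hCd _ (hshiftmem z hz)).differentiableAt).hasDerivAt
    have hcomp : HasDerivAt (fun w : ℂ => C (w - ((s2:ℝ):ℂ)))
        (deriv C (z - ((s2:ℝ):ℂ)) * 1) z := HasDerivAt.comp (h₂ := C) z hC' hsh
    rw [mul_one] at hcomp
    have := hsh.mul hcomp
    rw [hGdef]
    refine this.congr_deriv ?_
    ring
  have h00 : ((s2:ℝ):ℂ) - ((s2:ℝ):ℂ) = 0 := sub_self _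
  have hGderiv : deriv G ((s2:ℝ):ℂ) = C 0 := by
    have := (hG1 _ (Metric.mem_ball_self hεpos)).deriv
    rw [h00] at this
    simpa using this
  refine ⟨ε, hεpos, G, ?_, ?_, ?_, ?_, ?_, ?_⟩
  · -- differentiability
    intro z hz
    have h1 : DifferentiableAt ℂ G z := ((hG1 z hz).differentiableAt)
    exact h1.differentiableWithinAt
  · -- real values
    intro z hz
    obtain ⟨hz1, hz2⟩ := hz
    set t : ℝ := z - s2 with htdef
    have ht0 : 0 < t := by rw [htdef]; linarith
    have htε : t < ε := by rw [htdef]; linarith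
    have hzt : ((z:ℝ):ℂ) - ((s2:ℝ):ℂ) = ((t:ℝ):ℂ) := (Complex.ofReal_sub z s2).symm
    have htmem : ((t:ℝ):ℂ) ∈ Metric.ball (0:ℂ) ε := by
      rw [mem_ball_zero_iff, Complex.norm_real, Real.norm_eq_abs, abs_of_pos ht0]
      exact htε
    have hBt : B ((t:ℝ):ℂ) = ((Br t : ℝ):ℂ) := by
      apply hBreal
      rw [abs_of_pos ht0]
      calc t < ε := htε
      _ ≤ ρ/2 := hερ2
      _ < ρ := by linarith
    have hBrpos : 0 < Br t := by
      have := hBpos _ htmem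
      rw [hBt, Complex.ofReal_re] at this
      exact this
    set Q : ℝ := 3 * Real.pi / 2 * Br t with hQdef
    have hQpos : 0 < Q := by rw [hQdef]; positivity
    have hut : u ((t:ℝ):ℂ) = ((Q:ℝ):ℂ) := by
      rw [hudef]
      simp only
      rw [hBt, hQdef]
      push_cast; ring
    have hCt : C ((t:ℝ):ℂ) = ((Q ^ ((2:ℝ)/3) : ℝ):ℂ) := by
      rw [hCdef]
      simp only
      rw [hut, cexp_twothirds_log hQpos]
    -- change of variables
    have hzs2t : z = s2 + t := by rw [htdef]; ring
    have himsub : (fun s : ℝ => s2 + s * t) '' (uIcc (0:ℝ) 1) ⊆ Icc s2 (s2 + δ₀) := by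
      intro w hw
      obtain ⟨s, hs, rfl⟩ := hw
      rw [uIcc_of_le (by norm_num : (0:ℝ) ≤ 1)] at hs
      have hst0 : 0 ≤ s * t := mul_nonneg hs.1 ht0.le
      have hst1 : s * t ≤ t := by nlinarith [hs.1, hs.2, ht0.le]
      simp only [mem_Icc]
      exact ⟨by linarith, by linarith⟩
    have hgcont : ContinuousOn (fun w : ℝ => h w * Real.sqrt (w ^ 2 - 2))
        ((fun s : ℝ => s2 + s * t) '' (uIcc (0:ℝ) 1)) := by
      apply ContinuousOn.mul
      · exact ((hUan.continuousOn).mono hUsub).mono himsub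
      · exact (Real.continuous_sqrt.comp ((continuous_pow 2).sub continuous_const)).continuousOn
    have hcv := intervalIntegral.integral_comp_smul_deriv''
      (f := fun s : ℝ => s2 + s * t) (f' := fun _ : ℝ => t)
      (g := fun w : ℝ => h w * Real.sqrt (w ^ 2 - 2)) (a := (0:ℝ)) (b := 1)
      ((continuous_const.add (continuous_id.mul continuous_const)).continuousOn)
      (fun x _ => by
        have : HasDerivAt (fun s : ℝ => s2 + s * t) t x := by
          simpa using ((hasDerivAt_id x).mul_const t).const_add s2
        exact this.hasDerivWithinAt)
      continuousOn_const hgcont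
    simp only [zero_mul, add_zero, one_mul] at hcv
    rw [← hzs2t] at hcv
    have hlhs : ∀ s ∈ uIcc (0:ℝ) 1,
        t • ((fun w : ℝ => h w * Real.sqrt (w ^ 2 - 2)) ∘ (fun s : ℝ => s2 + s * t)) s
        = (t * Real.sqrt t) *
          (Real.sqrt s * (h (s2 + s * t) * Real.sqrt ((s2 + s * t) + s2))) := by
      intro s hs
      rw [uIcc_of_le (by norm_num : (0:ℝ) ≤ 1)] at hs
      have hw : (s2 + s * t) ^ 2 - 2 = (s * t) * ((s2 + s * t) + s2) := by
        have : (s2 + s * t - s2) * ((s2 + s * t) + s2) = (s2 + s*t)^2 - s2^2 := by ring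
        rw [hs2sq] at this
        rw [← this]; ring
      simp only [Function.comp_apply, smul_eq_mul]
      rw [hw, Real.sqrt_mul (mul_nonneg hs.1 ht0.le),
        Real.sqrt_mul hs.1]
      ring
    rw [intervalIntegral.integral_congr hlhs, intervalIntegral.integral_const_mul] at hcv
    -- hcv : (t * √t) * Br t = ∫ w in s2..z, h w √(w²-2)
    have hI : (3 * Real.pi / 2) * ∫ w in s2..z, h w * Real.sqrt (w ^ 2 - 2)
        = (t * Real.sqrt t) * Q := by
      rw [← hcv, hQdef, hBrdef]
      ring
    have hrpow : ((t * Real.sqrt t) * Q) ^ ((2:ℝ)/3) = t * Q ^ ((2:ℝ)/3) := by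
      rw [Real.mul_rpow (by positivity) hQpos.le, rpow_three_halves ht0,
        ← Real.rpow_mul ht0.le]
      norm_num
    rw [hGdef]
    simp only
    rw [hzt, hCt, hI, hrpow]
    push_cast; ring
  · -- G(√2) = 0
    rw [hGdef]; simp
  · -- first derivative
    rw [hGderiv, hC0]
  · -- nonzero
    rw [hGderiv, hC0]
    exact_mod_cast Complex.ofReal_ne_zero.mpr (by positivity)
  · -- second derivative
    have hCdiffOn : DifferentiableOn ℂ C (Metric.ball (0:ℂ) ε) := fun ζ hζ =>
      ((hCd ζ hζ).differentiableAt).differentiableWithinAt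
    have hCan : AnalyticOnNhd ℂ C (Metric.ball (0:ℂ) ε) :=
      hCdiffOn.analyticOnNhd Metric.isOpen_ball
    have hdCd : DifferentiableAt ℂ (deriv C) 0 :=
      ((hCan.deriv) 0 (Metric.mem_ball_self hεpos)).differentiableAt
    have hGev : deriv G =ᶠ[nhds ((s2:ℝ):ℂ)]
        fun z => C (z - ((s2:ℝ):ℂ)) + (z - ((s2:ℝ):ℂ)) * deriv C (z - ((s2:ℝ):ℂ)) := by
      filter_upwards [Metric.isOpen_ball.mem_nhds (Metric.mem_ball_self hεpos)] with z hz
      exact (hG1 z hz).deriv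
    rw [hGev.deriv_eq]
    have hsh : HasDerivAt (fun w : ℂ => w - ((s2:ℝ):ℂ)) 1 ((s2:ℝ):ℂ) :=
      (hasDerivAt_id _).sub_const _
    have hC'0 : HasDerivAt C (deriv C 0) (((s2:ℝ):ℂ) - ((s2:ℝ):ℂ)) := by
      rw [h00]
      exact ((hCd 0 (Metric.mem_ball_self hεpos)).differentiableAt).hasDerivAt
    have t1 : HasDerivAt (fun z : ℂ => C (z - ((s2:ℝ):ℂ))) (deriv C 0 * 1) ((s2:ℝ):ℂ) :=
      HasDerivAt.comp_of_eq (h₂ := C) ((s2:ℝ):ℂ) hC'0 hsh rfl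
    rw [mul_one] at t1
    have hdC0 : HasDerivAt (deriv C) (deriv (deriv C) 0) (((s2:ℝ):ℂ) - ((s2:ℝ):ℂ)) := by
      rw [h00]
      exact hdCd.hasDerivAt
    have t2 : HasDerivAt (fun z : ℂ => deriv C (z - ((s2:ℝ):ℂ)))
        (deriv (deriv C) 0 * 1) ((s2:ℝ):ℂ) :=
      HasDerivAt.comp_of_eq ((s2:ℝ):ℂ) hdC0 hsh rfl
    rw [mul_one] at t2
    have t3 := hsh.mul t2
    have t4 := t1.add t3
    rw [(show HasDerivAt (fun z : ℂ => C (z - ((s2:ℝ):ℂ)) + (z - ((s2:ℝ):ℂ)) * deriv C (z - ((s2:ℝ):ℂ))) _ ((s2:ℝ):ℂ) from t4).deriv, h00]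
    have hderivC0 : deriv C 0 =
        C 0 * ((2/3 : ℂ) * ((u 0)⁻¹ * (((3 * Real.pi / 2 : ℝ):ℂ) * dB 0))) :=
      (hCd 0 (Metric.mem_ball_self hεpos)).deriv
    rw [hderivC0, hC0, hu0, hdB0]
    have key : 2 * ((s2 * (Real.pi * h s2) ^ ((2:ℝ)/3)) *
        ((2/3 : ℝ) * (P⁻¹ * ((3 * Real.pi / 2) * ((2/5 : ℝ) * DA)))))
        = 2 * s2 * (Real.pi * h s2) ^ ((2:ℝ)/3) * (2/5)
          * (deriv h s2 / h s2 + 1/(4*s2)) := by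
      rw [hDAdef, hPdef]
      field_simp
    rw [← key]
    push_cast
    ring
end
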